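/- arXiv:2409.01606 — 6 statements merged into one kernel-verified Lean document; each statement's English description precedes it below -/
import Mathlib

section
/- Quantitative law of large numbers in L¹ for interaction functionals: Let (V, ‖·‖_V) be a Banach space, let (Z_i)_{i≥1} be independent identically distributed V-valued random variables with E‖Z₁‖_V² < ∞, and let h : V × V → ℝ be measurable with at most linear growth, i.e. |h(v, ṽ)| ≤ K_h(1 + ‖v‖_V + ‖ṽ‖_V) for all v, ṽ ∈ V and some constant K_h > 0. Then there exists a constant c̃ > 0 depending only on K_h (and not on V, h, the law of Z₁, or N) such that for every N ≥ 1, E | (1/N) Σ_{m=1}^N h(Z₁, Z_m) − ∫_V h(Z₁, y) μ(dy) | ≤ c̃ (1 + (E‖Z₁‖_V²)^{1/2}) N^{−1/2}, where μ denotes the law of Z₁. -/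
open MeasureTheory ProbabilityTheory

lemma myIntMul {Ω : Type*} [MeasurableSpace Ω] {P : Measure Ω} {f g : Ω → ℝ}
    (hf : MemLp f 2 P) (hg : MemLp g 2 P) : Integrable (fun ω => f ω * g ω) P := by
  have := hg.smul (φ := f) (p := 2) (q := 2) (r := 1) hf
    (hpqr := ⟨by rw [inv_one]; exact ENNReal.inv_two_add_inv_two⟩)
  rw [memLp_one_iff_integrable] at this
  exact this

lemma myL1sqrt {Ω : Type*} [MeasurableSpace Ω] {P : Measure Ω} [IsProbabilityMeasure P]
    {f : Ω → ℝ} (hf : MemLp f 2 P) :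
    ∫ ω, |f ω| ∂P ≤ Real.sqrt (∫ ω, (f ω) ^ 2 ∂P) := by
  have habs : MemLp (fun ω => |f ω|) 2 P := by exact hf.abs
  have hv := variance_eq_sub habs
  have hnn := variance_nonneg (fun ω => |f ω|) P
  rw [hv] at hnn
  have hsq : ∫ ω, |f ω| ^ 2 ∂P = ∫ ω, (f ω) ^ 2 ∂P := by
    congr 1; ext ω; exact sq_abs _
  refine (Real.le_sqrt (integral_nonneg fun ω => abs_nonneg _)
    (integral_nonneg fun ω => sq_nonneg _)).2 ?_
  have : (∫ ω, |f ω| ∂P) ^ 2 ≤ ∫ ω, |f ω| ^ 2 ∂P := by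
    simpa [Pi.pow_apply] using sub_nonneg.1 hnn
  linarith [hsq ▸ this]

/-- Quantitative law of large numbers in `L¹` for interaction functionals:
for any `K_h > 0` there is a constant `c > 0`, depending only on `K_h`, such that
for any Banach space `V`, any i.i.d. sequence `(Z_i)_{i ≥ 1}` of `V`-valued random
variables with common law `μ` and finite second moment, any measurable
`h : V × V → ℝ` of at most linear growth with constant `K_h`, and any `N ≥ 1`,
`E |(1/N) ∑_{m=1}^N h(Z₁, Z_m) − ∫_V h(Z₁, y) μ(dy)|
  ≤ c (1 + (E‖Z₁‖²)^{1/2}) N^{-1/2}`. -/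
theorem quantitative_LLN_interaction
    (K_h : ℝ) (hKh : 0 < K_h) :
    ∃ c > (0:ℝ),
      ∀ (V : Type) [NormedAddCommGroup V] [NormedSpace ℝ V] [CompleteSpace V]
        [MeasurableSpace V] [BorelSpace V]
        (Ω : Type) [MeasurableSpace Ω] (P : Measure Ω) [IsProbabilityMeasure P]
        (Z : ℕ → Ω → V) (μ : Measure V) [IsProbabilityMeasure μ],
        (∀ i, Measurable (Z i)) →
        iIndepFun Z P →
        (∀ i, Measure.map (Z i) P = μ) →
        Integrable (fun ω => ‖Z 1 ω‖ ^ 2) P →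
        ∀ (h : V × V → ℝ), Measurable h →
        (∀ v w : V, |h (v, w)| ≤ K_h * (1 + ‖v‖ + ‖w‖)) →
        ∀ (N : ℕ), 1 ≤ N →
          (∫ ω, |(1 / (N : ℝ)) * ∑ m ∈ Finset.Icc 1 N, h (Z 1 ω, Z m ω)
              - ∫ y, h (Z 1 ω, y) ∂μ| ∂P)
            ≤ c * (1 + Real.sqrt (∫ ω, ‖Z 1 ω‖ ^ 2 ∂P)) * (N : ℝ) ^ (-(1/2) : ℝ) := by
  refine ⟨6 * K_h, by positivity, ?_⟩
  intro V _ _ _ _ _ Ω _ P _ Z μ _ hZmeas hindep hlaw hZ2 h hmeas hgrowth N hN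
  set M := ∫ ω, ‖Z 1 ω‖ ^ 2 ∂P with hMdef
  have hM0 : 0 ≤ M := integral_nonneg fun ω => sq_nonneg _
  have hsM : 0 ≤ Real.sqrt M := Real.sqrt_nonneg M
  -- transfer of moments
  have hnsqm : Measurable (fun y : V => ‖y‖ ^ 2) := measurable_norm.pow_const 2
  have hμ2 : Integrable (fun y => ‖y‖ ^ 2) μ := by
    rw [← hlaw 1]
    exact (integrable_map_measure hnsqm.aestronglyMeasurable (hZmeas 1).aemeasurable).2 hZ2
  have hZi2 : ∀ i, Integrable (fun ω => ‖Z i ω‖ ^ 2) P := by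
    intro i
    exact (integrable_map_measure hnsqm.aestronglyMeasurable
      (hZmeas i).aemeasurable).1 (by rw [hlaw i]; exact hμ2)
  have hμ2int : ∫ y, ‖y‖ ^ 2 ∂μ = M := by
    rw [← hlaw 1, integral_map (hZmeas 1).aemeasurable hnsqm.aestronglyMeasurable]
  have hZi2int : ∀ i, ∫ ω, ‖Z i ω‖ ^ 2 ∂P = M := by
    intro i
    rw [← hμ2int, ← hlaw i, integral_map (hZmeas i).aemeasurable hnsqm.aestronglyMeasurable]
  have hmemnorm : ∀ i, MemLp (fun ω => ‖Z i ω‖) 2 P := fun i =>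
    (memLp_two_iff_integrable_sq (hZmeas i).norm.aestronglyMeasurable).2 (hZi2 i)
  have hμnorm : MemLp (fun y : V => ‖y‖) 2 μ :=
    (memLp_two_iff_integrable_sq measurable_norm.aestronglyMeasurable).2 hμ2
  have hμ1 : Integrable (fun y : V => ‖y‖) μ := hμnorm.integrable one_le_two
  have hE1 : ∫ y, ‖y‖ ∂μ ≤ Real.sqrt M := by
    have := myL1sqrt hμnorm
    simpa [abs_norm, hμ2int] using this
  -- the centered kernel
  set H : V → ℝ := fun z => ∫ y, h (z, y) ∂μ with hHdef
  have hHsm : StronglyMeasurable H := hmeas.stronglyMeasurable.integral_prod_right'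
  have hhz : ∀ z : V, Integrable (fun w => h (z, w)) μ := by
    intro z
    refine Integrable.mono' ((integrable_const (K_h * (1 + ‖z‖))).add (hμ1.const_mul K_h)) ?_ ?_
    · exact (hmeas.comp (measurable_prodMk_left)).aestronglyMeasurable
    · refine Filter.Eventually.of_forall fun w => ?_
      calc ‖h (z, w)‖ = |h (z, w)| := rfl
        _ ≤ K_h * (1 + ‖z‖ + ‖w‖) := hgrowth z w
        _ = K_h * (1 + ‖z‖) + K_h * ‖w‖ := by ring
  have hHbound : ∀ z : V, |H z| ≤ K_h * (1 + ‖z‖ + Real.sqrt M) := by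
    intro z
    calc |H z| ≤ ∫ y, |h (z, y)| ∂μ := by
          simpa using norm_integral_le_integral_norm (f := fun y => h (z, y)) (μ := μ)
      _ ≤ ∫ y, K_h * (1 + ‖z‖ + ‖y‖) ∂μ := by
          refine integral_mono (hhz z).abs ?_ fun y => hgrowth z y
          exact ((integrable_const (K_h * (1 + ‖z‖))).add (hμ1.const_mul K_h)).congr
            (Filter.Eventually.of_forall fun y => by simp only [Pi.add_apply]; ring)
      _ = K_h * (1 + ‖z‖ + ∫ y, ‖y‖ ∂μ) := by
          rw [integral_const_mul, integral_add (integrable_const _) hμ1, integral_const]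
          simp
      _ ≤ K_h * (1 + ‖z‖ + Real.sqrt M) := by
          have := norm_nonneg z
          nlinarith [hE1]
  set g : V → V → ℝ := fun z w => h (z, w) - H z with hgdef
  have hg0 : ∀ z, ∫ w, g z w ∂μ = 0 := by
    intro z
    rw [hgdef]
    simp only
    rw [integral_sub (hhz z) (integrable_const _), integral_const]
    simp [hHdef]
  have hgmeas : Measurable (fun p : V × V => g p.1 p.2) := by
    exact hmeas.sub (hHsm.measurable.comp measurable_fst)
  have hgbound : ∀ z w, |g z w| ≤ K_h * (2 + 2*‖z‖ + 2*‖w‖ + Real.sqrt M) := by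
    intro z w
    have h1 := hgrowth z w
    have h2 := hHbound z
    have h3 := abs_sub (h (z, w)) (H z)
    have := norm_nonneg w
    calc |g z w| ≤ |h (z, w)| + |H z| := abs_sub _ _
      _ ≤ K_h * (2 + 2*‖z‖ + 2*‖w‖ + Real.sqrt M) := by nlinarith
  -- the summands
  set G : ℕ → Ω → ℝ := fun m ω => g (Z 1 ω) (Z m ω) with hGdef
  have hGmeas : ∀ m, Measurable (G m) := fun m => hgmeas.comp ((hZmeas 1).prodMk (hZmeas m))
  have hφmem : ∀ m, MemLp (fun ω => K_h * (2 + 2*‖Z 1 ω‖ + 2*‖Z m ω‖ + Real.sqrt M)) 2 P := by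
    intro m
    exact ((((memLp_const (2:ℝ)).add ((hmemnorm 1).const_mul 2)).add
      ((hmemnorm m).const_mul 2)).add (memLp_const (Real.sqrt M))).const_mul K_h
  have hGmem : ∀ m, MemLp (G m) 2 P := by
    intro m
    refine (hφmem m).mono (hGmeas m).aestronglyMeasurable ?_
    refine Filter.Eventually.of_forall fun ω => ?_
    rw [Real.norm_eq_abs, Real.norm_eq_abs]
    exact (hgbound (Z 1 ω) (Z m ω)).trans (le_abs_self _)
  have hGsq : ∀ m, ∫ ω, (G m ω) ^ 2 ∂P ≤ 36 * K_h ^ 2 * (1 + M) := by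
    intro m
    have hψint : Integrable
        (fun ω => 4 * K_h ^ 2 * (4 + 4 * ‖Z 1 ω‖ ^ 2 + 4 * ‖Z m ω‖ ^ 2 + M)) P := by
      exact ((((integrable_const (4:ℝ)).add ((hZi2 1).const_mul 4)).add
        ((hZi2 m).const_mul 4)).add (integrable_const M)).const_mul (4 * K_h ^ 2)
    have hpt : ∀ ω, (G m ω) ^ 2 ≤
        4 * K_h ^ 2 * (4 + 4 * ‖Z 1 ω‖ ^ 2 + 4 * ‖Z m ω‖ ^ 2 + M) := by
      intro ω
      set a := ‖Z 1 ω‖; set b := ‖Z m ω‖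
      have hb := hgbound (Z 1 ω) (Z m ω)
      have h1 : (G m ω) ^ 2 ≤ (K_h * (2 + 2*a + 2*b + Real.sqrt M)) ^ 2 := by
        rw [← sq_abs (G m ω)]
        exact pow_le_pow_left₀ (abs_nonneg _) hb 2
      have hM' : Real.sqrt M ^ 2 = M := Real.sq_sqrt hM0
      nlinarith [sq_nonneg (2 - 2*a), sq_nonneg (2 - 2*b), sq_nonneg (2 - Real.sqrt M),
        sq_nonneg (2*a - 2*b), sq_nonneg (2*a - Real.sqrt M), sq_nonneg (2*b - Real.sqrt M),
        sq_nonneg K_h, hKh.le]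
    have hmono := integral_mono ((hGmem m).integrable_sq) hψint hpt
    have hcomp : ∫ ω, 4 * K_h ^ 2 * (4 + 4 * ‖Z 1 ω‖ ^ 2 + 4 * ‖Z m ω‖ ^ 2 + M) ∂P
        = 4 * K_h ^ 2 * (4 + 4 * M + 4 * M + M) := by
      rw [integral_const_mul]
      congr 1
      have hi1 : Integrable (fun _ : Ω => (4:ℝ)) P := integrable_const 4
      have hi2 : Integrable (fun ω => 4 * ‖Z 1 ω‖ ^ 2) P := (hZi2 1).const_mul 4
      have hi3 : Integrable (fun ω => 4 * ‖Z m ω‖ ^ 2) P := (hZi2 m).const_mul 4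
      have hi12 : Integrable (fun ω => (4:ℝ) + 4 * ‖Z 1 ω‖ ^ 2) P := hi1.add hi2
      have hi123 : Integrable (fun ω => (4:ℝ) + 4 * ‖Z 1 ω‖ ^ 2 + 4 * ‖Z m ω‖ ^ 2) P :=
        hi12.add hi3
      rw [integral_add hi123 (integrable_const M), integral_add hi12 hi3,
          integral_add hi1 hi2, integral_const_mul, integral_const_mul, integral_const,
          integral_const, hZi2int 1, hZi2int m]
      simp
    rw [hcomp] at hmono
    nlinarith [sq_nonneg K_h]
  -- joint laws
  have hpair : ∀ i j : ℕ, i ≠ j → Measure.map (fun ω => (Z i ω, Z j ω)) P = μ.prod μ := by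
    intro i j hij
    refine ((indepFun_iff_map_prod_eq_prod_map_map (hZmeas i).aemeasurable
      (hZmeas j).aemeasurable).1 (hindep.indepFun hij)).trans ?_
    rw [hlaw i, hlaw j]
  have htriple : ∀ m l : ℕ, m ≠ 1 → l ≠ 1 → m ≠ l →
      Measure.map (fun ω => (Z 1 ω, (Z m ω, Z l ω))) P = μ.prod (μ.prod μ) := by
    intro m l hm hl hml
    have hind : IndepFun (Z 1) (fun ω => (Z m ω, Z l ω)) P :=
      (hindep.indepFun_prodMk hZmeas m l 1 hm hl).symm
    rw [(indepFun_iff_map_prod_eq_prod_map_map (hZmeas 1).aemeasurable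
      ((hZmeas m).prodMk (hZmeas l)).aemeasurable).1 hind, hlaw 1, hpair m l hml]
  -- cross terms vanish
  have hcross0 : ∀ l, l ≠ 1 → ∫ ω, G 1 ω * G l ω ∂P = 0 := by
    intro l hl
    have hT : AEMeasurable (fun ω => (Z 1 ω, Z l ω)) P :=
      ((hZmeas 1).prodMk (hZmeas l)).aemeasurable
    have hFmeas : Measurable (fun p : V × V => g p.1 p.1 * g p.1 p.2) :=
      (hgmeas.comp (measurable_fst.prodMk measurable_fst)).mul hgmeas
    have hmap := hpair 1 l (Ne.symm hl)
    have hint : Integrable (fun p : V × V => g p.1 p.1 * g p.1 p.2) (μ.prod μ) := by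
      rw [← hmap]
      exact (integrable_map_measure hFmeas.aestronglyMeasurable hT).2
        (myIntMul (hGmem 1) (hGmem l))
    have heq : ∫ ω, G 1 ω * G l ω ∂P = ∫ p, g p.1 p.1 * g p.1 p.2 ∂(μ.prod μ) := by
      rw [← hmap, integral_map hT hFmeas.aestronglyMeasurable]
    rw [heq, integral_prod _ hint]
    have hz : ∀ z : V, ∫ w, g z z * g z w ∂μ = 0 := fun z => by
      rw [integral_const_mul, hg0 z, mul_zero]
    simp only [hz, integral_zero]
  have hcross : ∀ m l : ℕ, m ≠ l → ∫ ω, G m ω * G l ω ∂P = 0 := by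
    intro m l hml
    by_cases hm : m = 1
    · subst hm
      exact hcross0 l (Ne.symm hml)
    · by_cases hl : l = 1
      · subst hl
        rw [show (∫ ω, G m ω * G 1 ω ∂P) = ∫ ω, G 1 ω * G m ω ∂P from
          integral_congr_ae (Filter.Eventually.of_forall fun ω => mul_comm _ _)]
        exact hcross0 m hm
      · have hmap := htriple m l hm hl hml
        have hT : AEMeasurable (fun ω => (Z 1 ω, (Z m ω, Z l ω))) P :=
          ((hZmeas 1).prodMk ((hZmeas m).prodMk (hZmeas l))).aemeasurable
        have hFmeas : Measurable (fun p : V × (V × V) => g p.1 p.2.1 * g p.1 p.2.2) :=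
          (hgmeas.comp (measurable_fst.prodMk (measurable_fst.comp measurable_snd))).mul
            (hgmeas.comp (measurable_fst.prodMk (measurable_snd.comp measurable_snd)))
        have hint : Integrable (fun p : V × (V × V) => g p.1 p.2.1 * g p.1 p.2.2)
            (μ.prod (μ.prod μ)) := by
          rw [← hmap]
          exact (integrable_map_measure hFmeas.aestronglyMeasurable hT).2
            (myIntMul (hGmem m) (hGmem l))
        have heq : ∫ ω, G m ω * G l ω ∂P
            = ∫ p, g p.1 p.2.1 * g p.1 p.2.2 ∂(μ.prod (μ.prod μ)) := by
          rw [← hmap, integral_map hT hFmeas.aestronglyMeasurable]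
        rw [heq, integral_prod _ hint]
        have hz : ∀ z : V, ∫ q : V × V, g z q.1 * g z q.2 ∂(μ.prod μ) = 0 := by
          intro z
          rw [integral_prod_mul (f := g z) (g := g z), hg0 z, mul_zero]
        simp only [hz, integral_zero]
  -- the normalized sum
  set X : Ω → ℝ := fun ω => (1 / (N:ℝ)) * ∑ m ∈ Finset.Icc 1 N, G m ω with hXdef
  have hXmem : MemLp X 2 P := by
    have hsum : MemLp (fun ω => ∑ m ∈ Finset.Icc 1 N, G m ω) 2 P := by
      have h2 : MemLp (∑ i ∈ Finset.Icc 1 N, G i) 2 P :=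
        memLp_finset_sum' _ fun m _ => hGmem m
      exact h2.ae_eq (Filter.Eventually.of_forall fun ω => Finset.sum_apply ω _ G)
    exact hsum.const_mul _
  have hcard : (Finset.Icc 1 N).card = N := by rw [Nat.card_Icc]; omega
  have hNpos : (0:ℝ) < (N:ℝ) := by exact_mod_cast hN
  have hNne : (N:ℝ) ≠ 0 := ne_of_gt hNpos
  have hEX2 : ∫ ω, (X ω) ^ 2 ∂P ≤ 36 * K_h ^ 2 * (1 + M) / N := by
    have hXsq : ∀ ω, (X ω) ^ 2 = (1 / (N:ℝ)) ^ 2 *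
        ∑ m ∈ Finset.Icc 1 N, ∑ l ∈ Finset.Icc 1 N, G m ω * G l ω := by
      intro ω
      rw [hXdef, mul_pow]
      congr 1
      rw [pow_two, Finset.sum_mul_sum]
    calc ∫ ω, (X ω) ^ 2 ∂P
        = (1 / (N:ℝ)) ^ 2 * ∫ ω, ∑ m ∈ Finset.Icc 1 N, ∑ l ∈ Finset.Icc 1 N,
            G m ω * G l ω ∂P := by
          simp_rw [hXsq]; rw [integral_const_mul]
      _ = (1 / (N:ℝ)) ^ 2 * ∑ m ∈ Finset.Icc 1 N, ∑ l ∈ Finset.Icc 1 N,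
            ∫ ω, G m ω * G l ω ∂P := by
          rw [integral_finset_sum _ (fun m _ =>
            integrable_finset_sum _ fun l _ => myIntMul (hGmem m) (hGmem l))]
          congr 1
          refine Finset.sum_congr rfl fun m _ => ?_
          rw [integral_finset_sum _ fun l _ => myIntMul (hGmem m) (hGmem l)]
      _ = (1 / (N:ℝ)) ^ 2 * ∑ m ∈ Finset.Icc 1 N, ∫ ω, G m ω * G m ω ∂P := by
          congr 1
          refine Finset.sum_congr rfl fun m hm => ?_
          exact Finset.sum_eq_single_of_mem m hm fun l _ hlm => hcross m l (Ne.symm hlm)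
      _ ≤ (1 / (N:ℝ)) ^ 2 * ((N:ℝ) * (36 * K_h ^ 2 * (1 + M))) := by
          have hle : ∑ m ∈ Finset.Icc 1 N, ∫ ω, G m ω * G m ω ∂P
              ≤ ∑ _m ∈ Finset.Icc 1 N, 36 * K_h ^ 2 * (1 + M) :=
            Finset.sum_le_sum fun m _ => by
              simpa [pow_two] using hGsq m
          rw [Finset.sum_const, hcard, nsmul_eq_mul] at hle
          exact mul_le_mul_of_nonneg_left hle (by positivity)
      _ = 36 * K_h ^ 2 * (1 + M) / N := by
          field_simp
  have hRsq : 36 * K_h ^ 2 * (1 + M) / N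
      ≤ (6 * K_h * (1 + Real.sqrt M) * (N:ℝ) ^ (-(1/2) : ℝ)) ^ 2 := by
    have hrpow : ((N:ℝ) ^ (-(1/2) : ℝ)) ^ 2 = ((N:ℝ))⁻¹ := by
      rw [← Real.rpow_natCast ((N:ℝ) ^ (-(1/2):ℝ)) 2, ← Real.rpow_mul (Nat.cast_nonneg N)]
      norm_num [Real.rpow_neg_one]
    have h1 : (1 + M) ≤ (1 + Real.sqrt M) ^ 2 := by
      nlinarith [Real.sq_sqrt hM0, hsM]
    calc 36 * K_h ^ 2 * (1 + M) / N ≤ 36 * K_h ^ 2 * (1 + Real.sqrt M) ^ 2 / N := by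
          gcongr
      _ = (6 * K_h * (1 + Real.sqrt M) * (N:ℝ) ^ (-(1/2) : ℝ)) ^ 2 := by
          rw [mul_pow, mul_pow, hrpow, div_eq_mul_inv]
          ring
  have hgoal_int : ∀ ω, (1 / (N:ℝ)) * ∑ m ∈ Finset.Icc 1 N, h (Z 1 ω, Z m ω)
      - ∫ y, h (Z 1 ω, y) ∂μ = X ω := by
    intro ω
    show _ - H (Z 1 ω) = (1 / (N:ℝ)) * ∑ m ∈ Finset.Icc 1 N, (h (Z 1 ω, Z m ω) - H (Z 1 ω))
    rw [Finset.sum_sub_distrib, Finset.sum_const, hcard, nsmul_eq_mul]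
    field_simp
  have hfun : (fun ω => |(1 / (N:ℝ)) * ∑ m ∈ Finset.Icc 1 N, h (Z 1 ω, Z m ω)
      - ∫ y, h (Z 1 ω, y) ∂μ|) = fun ω => |X ω| := by
    funext ω
    rw [hgoal_int ω]
  calc ∫ ω, |(1 / (N:ℝ)) * ∑ m ∈ Finset.Icc 1 N, h (Z 1 ω, Z m ω)
          - ∫ y, h (Z 1 ω, y) ∂μ| ∂P
      = ∫ ω, |X ω| ∂P := by rw [hfun]
    _ ≤ Real.sqrt (∫ ω, (X ω) ^ 2 ∂P) := myL1sqrt hXmem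
    _ ≤ Real.sqrt ((6 * K_h * (1 + Real.sqrt M) * (N:ℝ) ^ (-(1/2) : ℝ)) ^ 2) :=
        Real.sqrt_le_sqrt (hEX2.trans hRsq)
    _ = 6 * K_h * (1 + Real.sqrt M) * (N:ℝ) ^ (-(1/2) : ℝ) := by
        rw [Real.sqrt_sq (by positivity)]
end

section
/- ODE satisfied by the coupling distance function f: Let β > 0, R > 0, K₁ ≥ 0, K₂ > 0, let γ be the piecewise rate function (γ(r) = K₁r for r ≤ R, γ(r) = (−((K₁+K₂)/R)(r−R)+K₁)r for R ≤ r ≤ 2R, γ(r) = −K₂ r for r > 2R), let δ := ∫₀^∞ s e^{(1/(2β))∫₀ˢ γ(v)dv} ds, and define f(r) = ∫₀ʳ e^{−(1/(2β))∫₀ᵘ γ(v)dv} ( ∫_u^∞ s e^{(1/(2β))∫₀ˢ γ(v)dv} ds ) du for r ≥ 0. Then f is twice differentiable on (0,∞), f′(0) = δ, and for every r ≥ 0 one has f″(r) = −(1/(2β)) γ(r) f′(r) − r; equivalently, f′(r) γ(r) + 2β f″(r) = −2β r. -/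
open MeasureTheory Real

/-- The piecewise partially dissipative rate function `γ`. -/
noncomputable def rateGamma (R K₁ K₂ : ℝ) (r : ℝ) : ℝ :=
  if r ≤ R then K₁ * r
  else if r ≤ 2 * R then (-((K₁ + K₂) / R) * (r - R) + K₁) * r
  else -K₂ * r

/-- The constant `δ = ∫₀^∞ s e^{(1/(2β)) ∫₀ˢ γ(v) dv} ds`. -/
noncomputable def deltaConst (β R K₁ K₂ : ℝ) : ℝ :=
  ∫ s in Set.Ioi (0:ℝ),
    s * Real.exp ((1 / (2 * β)) * ∫ v in (0:ℝ)..s, rateGamma R K₁ K₂ v)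

/-- The coupling distance function
`f(r) = ∫₀ʳ e^{−(1/(2β))∫₀ᵘ γ} (∫_u^∞ s e^{(1/(2β))∫₀ˢ γ} ds) du`. -/
noncomputable def couplingF (β R K₁ K₂ : ℝ) (r : ℝ) : ℝ :=
  ∫ u in (0:ℝ)..r,
    Real.exp (-(1 / (2 * β)) * ∫ v in (0:ℝ)..u, rateGamma R K₁ K₂ v) *
      ∫ s in Set.Ioi u,
        s * Real.exp ((1 / (2 * β)) * ∫ v in (0:ℝ)..s, rateGamma R K₁ K₂ v)

noncomputable def Gaux (R K₁ K₂ : ℝ) (u : ℝ) : ℝ := ∫ v in (0:ℝ)..u, rateGamma R K₁ K₂ v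

noncomputable def phiAux (β R K₁ K₂ : ℝ) (s : ℝ) : ℝ :=
  s * Real.exp ((1 / (2 * β)) * Gaux R K₁ K₂ s)

noncomputable def Haux (β R K₁ K₂ : ℝ) (u : ℝ) : ℝ := ∫ s in Set.Ioi u, phiAux β R K₁ K₂ s

lemma rateGamma_cont {R : ℝ} (K₁ K₂ : ℝ) (hR : 0 < R) : Continuous (rateGamma R K₁ K₂) := by
  unfold rateGamma
  refine Continuous.if_le (by fun_prop) ?_ continuous_id continuous_const ?_
  · refine Continuous.if_le (by fun_prop) (by fun_prop) continuous_id continuous_const ?_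
    intro x hx
    change x = 2 * R at hx
    subst hx
    field_simp
    ring
  · intro x hx
    change x = R at hx
    subst hx
    rw [if_pos (by linarith)]
    field_simp
    ring

lemma Gaux_hasDeriv {R : ℝ} (K₁ K₂ : ℝ) (hR : 0 < R) (u : ℝ) :
    HasDerivAt (Gaux R K₁ K₂) (rateGamma R K₁ K₂ u) u := by
  have hγ := rateGamma_cont K₁ K₂ hR
  exact intervalIntegral.integral_hasDerivAt_right (hγ.intervalIntegrable _ _)
    hγ.aestronglyMeasurable.stronglyMeasurableAtFilter hγ.continuousAt

lemma Gaux_cont {R : ℝ} (K₁ K₂ : ℝ) (hR : 0 < R) : Continuous (Gaux R K₁ K₂) :=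
  continuous_iff_continuousAt.2 fun u => (Gaux_hasDeriv K₁ K₂ hR u).continuousAt

lemma phiAux_cont {β R : ℝ} (K₁ K₂ : ℝ) (hR : 0 < R) : Continuous (phiAux β R K₁ K₂) := by
  have := Gaux_cont (R := R) K₁ K₂ hR
  unfold phiAux
  fun_prop

lemma Gaux_tail {R : ℝ} (K₁ K₂ : ℝ) (hR : 0 < R) {s : ℝ} (hs : 2 * R ≤ s) :
    Gaux R K₁ K₂ s = Gaux R K₁ K₂ (2 * R) - K₂ / 2 * s ^ 2 + K₂ / 2 * (2 * R) ^ 2 := by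
  have hγ := rateGamma_cont K₁ K₂ hR
  have h1 : (∫ v in (0:ℝ)..(2*R), rateGamma R K₁ K₂ v) + ∫ v in (2*R)..s, rateGamma R K₁ K₂ v
      = Gaux R K₁ K₂ s :=
    intervalIntegral.integral_add_adjacent_intervals (hγ.intervalIntegrable _ _)
      (hγ.intervalIntegrable _ _)
  have h2 : (∫ v in (2*R)..s, rateGamma R K₁ K₂ v) = ∫ v in (2*R)..s, -K₂ * v := by
    apply intervalIntegral.integral_congr
    intro v hv
    rw [Set.uIcc_of_le hs] at hv
    have hv1 : 2 * R ≤ v := hv.1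
    show rateGamma R K₁ K₂ v = -K₂ * v
    unfold rateGamma
    rw [if_neg (by linarith)]
    rcases eq_or_lt_of_le hv1 with h | h
    · rw [if_pos (by linarith)]
      rw [← h]
      field_simp
      ring
    · rw [if_neg (by linarith)]
  rw [h2, intervalIntegral.integral_const_mul, integral_id] at h1
  have : Gaux R K₁ K₂ (2*R) = ∫ v in (0:ℝ)..(2*R), rateGamma R K₁ K₂ v := rfl
  rw [this]
  linarith [h1]

lemma phiAux_integrableOn {β R K₂ : ℝ} (K₁ : ℝ) (hβ : 0 < β) (hR : 0 < R) (hK₂ : 0 < K₂)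
    (u : ℝ) : IntegrableOn (phiAux β R K₁ K₂) (Set.Ioi u) := by
  have hφc := phiAux_cont (β := β) K₁ K₂ hR
  set M := max u (2 * R) with hM
  have hM2 : 2 * R ≤ M := le_max_right _ _
  have huM : u ≤ M := le_max_left _ _
  rw [← Set.Ioc_union_Ioi_eq_Ioi huM]
  apply MeasureTheory.IntegrableOn.union
  · exact (hφc.integrableOn_Icc).mono_set Set.Ioc_subset_Icc_self
  · have hb : (0:ℝ) < 1 / (2 * β) * K₂ / 2 := by positivity
    have heq : Set.EqOn
        (fun s : ℝ => Real.exp (1 / (2 * β) * Gaux R K₁ K₂ (2 * R)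
            + 1 / (2 * β) * (K₂ / 2) * (2 * R) ^ 2)
          * (s * Real.exp (-(1 / (2 * β) * K₂ / 2) * s ^ 2)))
        (phiAux β R K₁ K₂) (Set.Ioi M) := by
      intro s hs
      have hs2 : 2 * R ≤ s := le_trans hM2 (le_of_lt hs)
      show _ = s * Real.exp ((1 / (2 * β)) * Gaux R K₁ K₂ s)
      rw [Gaux_tail K₁ K₂ hR hs2]
      calc Real.exp (1 / (2 * β) * Gaux R K₁ K₂ (2 * R)
              + 1 / (2 * β) * (K₂ / 2) * (2 * R) ^ 2)
            * (s * Real.exp (-(1 / (2 * β) * K₂ / 2) * s ^ 2))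
          = s * (Real.exp (1 / (2 * β) * Gaux R K₁ K₂ (2 * R)
              + 1 / (2 * β) * (K₂ / 2) * (2 * R) ^ 2)
            * Real.exp (-(1 / (2 * β) * K₂ / 2) * s ^ 2)) := by ring
        _ = s * Real.exp ((1 / (2 * β) * Gaux R K₁ K₂ (2 * R)
              + 1 / (2 * β) * (K₂ / 2) * (2 * R) ^ 2) + -(1 / (2 * β) * K₂ / 2) * s ^ 2) := by
            rw [← Real.exp_add]
        _ = s * Real.exp ((1 / (2 * β)) * (Gaux R K₁ K₂ (2 * R)
              - K₂ / 2 * s ^ 2 + K₂ / 2 * (2 * R) ^ 2)) := by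
            rw [show (1 / (2 * β) * Gaux R K₁ K₂ (2 * R)
              + 1 / (2 * β) * (K₂ / 2) * (2 * R) ^ 2) + -(1 / (2 * β) * K₂ / 2) * s ^ 2
              = (1 / (2 * β)) * (Gaux R K₁ K₂ (2 * R)
              - K₂ / 2 * s ^ 2 + K₂ / 2 * (2 * R) ^ 2) by ring]
    exact MeasureTheory.IntegrableOn.congr_fun
      (((integrable_mul_exp_neg_mul_sq hb).const_mul _).integrableOn) heq measurableSet_Ioi

lemma Haux_eq {β R K₂ : ℝ} (K₁ : ℝ) (hβ : 0 < β) (hR : 0 < R) (hK₂ : 0 < K₂) (u : ℝ) :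
    Haux β R K₁ K₂ u = Haux β R K₁ K₂ 0 - ∫ s in (0:ℝ)..u, phiAux β R K₁ K₂ s := by
  have hint := phiAux_integrableOn K₁ hβ hR hK₂
  rcases le_or_gt 0 u with h | h
  · rw [intervalIntegral.integral_of_le h]
    have hsplit : (∫ s in Set.Ioc 0 u, phiAux β R K₁ K₂ s)
        + ∫ s in Set.Ioi u, phiAux β R K₁ K₂ s = ∫ s in Set.Ioi 0, phiAux β R K₁ K₂ s := by
      rw [← MeasureTheory.setIntegral_union (Set.Ioc_disjoint_Ioi le_rfl) measurableSet_Ioi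
        ((hint 0).mono_set Set.Ioc_subset_Ioi_self) (hint u), Set.Ioc_union_Ioi_eq_Ioi h]
    show (∫ s in Set.Ioi u, phiAux β R K₁ K₂ s) = (∫ s in Set.Ioi 0, phiAux β R K₁ K₂ s) - _
    linarith [hsplit]
  · rw [intervalIntegral.integral_symm, intervalIntegral.integral_of_le h.le]
    have hsplit : (∫ s in Set.Ioc u 0, phiAux β R K₁ K₂ s)
        + ∫ s in Set.Ioi 0, phiAux β R K₁ K₂ s = ∫ s in Set.Ioi u, phiAux β R K₁ K₂ s := by
      rw [← MeasureTheory.setIntegral_union (Set.Ioc_disjoint_Ioi le_rfl) measurableSet_Ioi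
        ((hint u).mono_set Set.Ioc_subset_Ioi_self) (hint 0), Set.Ioc_union_Ioi_eq_Ioi h.le]
    show (∫ s in Set.Ioi u, phiAux β R K₁ K₂ s) = (∫ s in Set.Ioi 0, phiAux β R K₁ K₂ s) - -_
    linarith [hsplit]

lemma Haux_hasDeriv {β R K₂ : ℝ} (K₁ : ℝ) (hβ : 0 < β) (hR : 0 < R) (hK₂ : 0 < K₂) (u : ℝ) :
    HasDerivAt (Haux β R K₁ K₂) (-(phiAux β R K₁ K₂ u)) u := by
  have hφc := phiAux_cont (β := β) K₁ K₂ hR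
  have h : HasDerivAt (fun x => Haux β R K₁ K₂ 0 - ∫ s in (0:ℝ)..x, phiAux β R K₁ K₂ s)
      (-(phiAux β R K₁ K₂ u)) u := by
    have := (intervalIntegral.integral_hasDerivAt_right (hφc.intervalIntegrable 0 u)
      hφc.aestronglyMeasurable.stronglyMeasurableAtFilter hφc.continuousAt).const_sub
      (Haux β R K₁ K₂ 0)
    simpa using this
  exact h.congr_of_eventuallyEq
    (Filter.Eventually.of_forall fun x => Haux_eq K₁ hβ hR hK₂ x)

lemma Haux_cont {β R K₂ : ℝ} (K₁ : ℝ) (hβ : 0 < β) (hR : 0 < R) (hK₂ : 0 < K₂) :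
    Continuous (Haux β R K₁ K₂) :=
  continuous_iff_continuousAt.2 fun u => (Haux_hasDeriv K₁ hβ hR hK₂ u).continuousAt

noncomputable def couplingF' (β R K₁ K₂ : ℝ) (r : ℝ) : ℝ :=
  Real.exp (-(1 / (2 * β)) * Gaux R K₁ K₂ r) * Haux β R K₁ K₂ r


lemma couplingF_hasDeriv {β R K₂ : ℝ} (K₁ : ℝ) (hβ : 0 < β) (hR : 0 < R) (hK₂ : 0 < K₂) (r : ℝ) :
    HasDerivAt (couplingF β R K₁ K₂) (couplingF' β R K₁ K₂ r) r := by
  have hc : Continuous (couplingF' β R K₁ K₂) := by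
    have h1 := Gaux_cont (R := R) K₁ K₂ hR
    have h2 := Haux_cont (β := β) K₁ hβ hR hK₂
    unfold couplingF'
    fun_prop
  have : couplingF β R K₁ K₂ = fun r => ∫ u in (0:ℝ)..r, couplingF' β R K₁ K₂ u := rfl
  rw [this]
  exact intervalIntegral.integral_hasDerivAt_right (hc.intervalIntegrable 0 r)
    hc.aestronglyMeasurable.stronglyMeasurableAtFilter hc.continuousAt

lemma couplingF'_hasDeriv {β R K₂ : ℝ} (K₁ : ℝ) (hβ : 0 < β) (hR : 0 < R) (hK₂ : 0 < K₂) (r : ℝ) :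
    HasDerivAt (couplingF' β R K₁ K₂)
      (Real.exp (-(1 / (2 * β)) * Gaux R K₁ K₂ r) * (-(1 / (2 * β)) * rateGamma R K₁ K₂ r)
          * Haux β R K₁ K₂ r
        + Real.exp (-(1 / (2 * β)) * Gaux R K₁ K₂ r) * -(phiAux β R K₁ K₂ r)) r := by
  have hg : HasDerivAt (fun u => Real.exp (-(1 / (2 * β)) * Gaux R K₁ K₂ u))
      (Real.exp (-(1 / (2 * β)) * Gaux R K₁ K₂ r) * (-(1 / (2 * β)) * rateGamma R K₁ K₂ r)) r :=
    ((Gaux_hasDeriv K₁ K₂ hR r).const_mul (-(1 / (2 * β)))).exp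
  exact hg.mul (Haux_hasDeriv K₁ hβ hR hK₂ r)


/-- ODE satisfied by the coupling distance function `f`: `f` is twice
differentiable on `(0,∞)`, `f′(0) = δ`, and for every `r ≥ 0`,
`f″(r) = −(1/(2β)) γ(r) f′(r) − r`, equivalently
`f′(r) γ(r) + 2β f″(r) = −2β r`. -/
theorem couplingF_ode (β R K₁ K₂ : ℝ)
    (hβ : 0 < β) (hR : 0 < R) (hK₁ : 0 ≤ K₁) (hK₂ : 0 < K₂) :
    (∀ r ∈ Set.Ioi (0:ℝ),
        DifferentiableAt ℝ (couplingF β R K₁ K₂) r ∧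
        DifferentiableAt ℝ (deriv (couplingF β R K₁ K₂)) r) ∧
    deriv (couplingF β R K₁ K₂) 0 = deltaConst β R K₁ K₂ ∧
    (∀ r ≥ (0:ℝ),
      deriv (deriv (couplingF β R K₁ K₂)) r =
          -(1 / (2 * β)) * rateGamma R K₁ K₂ r * deriv (couplingF β R K₁ K₂) r - r ∧
      deriv (couplingF β R K₁ K₂) r * rateGamma R K₁ K₂ r +
          2 * β * deriv (deriv (couplingF β R K₁ K₂)) r = -(2 * β) * r) := by
  have hd1 : ∀ r, HasDerivAt (couplingF β R K₁ K₂) (couplingF' β R K₁ K₂ r) r :=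
    couplingF_hasDeriv K₁ hβ hR hK₂
  have hderiv1 : deriv (couplingF β R K₁ K₂) = couplingF' β R K₁ K₂ :=
    funext fun r => (hd1 r).deriv
  have hone : ∀ r : ℝ, Real.exp (-(1 / (2 * β)) * Gaux R K₁ K₂ r)
      * Real.exp ((1 / (2 * β)) * Gaux R K₁ K₂ r) = 1 := by
    intro r
    rw [← Real.exp_add, show -(1 / (2 * β)) * Gaux R K₁ K₂ r
      + (1 / (2 * β)) * Gaux R K₁ K₂ r = 0 by ring, Real.exp_zero]
  have hd2 : ∀ r, HasDerivAt (deriv (couplingF β R K₁ K₂))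
      (-(1 / (2 * β)) * rateGamma R K₁ K₂ r * couplingF' β R K₁ K₂ r - r) r := by
    intro r
    rw [hderiv1]
    have h := couplingF'_hasDeriv K₁ hβ hR hK₂ r
    convert h using 1
    unfold couplingF' phiAux
    rw [show Real.exp (-(1 / (2 * β)) * Gaux R K₁ K₂ r)
        * -(r * Real.exp (1 / (2 * β) * Gaux R K₁ K₂ r))
      = -r * (Real.exp (-(1 / (2 * β)) * Gaux R K₁ K₂ r)
        * Real.exp ((1 / (2 * β)) * Gaux R K₁ K₂ r)) by ring, hone r]
    ring
  refine ⟨fun r _ => ⟨(hd1 r).differentiableAt, (hd2 r).differentiableAt⟩, ?_, ?_⟩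
  · rw [hderiv1]
    have h0 : Gaux R K₁ K₂ 0 = 0 := intervalIntegral.integral_same
    show Real.exp (-(1 / (2 * β)) * Gaux R K₁ K₂ 0) * Haux β R K₁ K₂ 0 = deltaConst β R K₁ K₂
    rw [h0, mul_zero, Real.exp_zero, one_mul]
    rfl
  · intro r hr
    have e1 : deriv (deriv (couplingF β R K₁ K₂)) r
        = -(1 / (2 * β)) * rateGamma R K₁ K₂ r * deriv (couplingF β R K₁ K₂) r - r := by
      rw [(hd2 r).deriv, hderiv1]
    refine ⟨e1, ?_⟩
    rw [e1]
    have h2β : (2 * β) ≠ 0 := by positivity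
    field_simp
    ring
end

section
/- Concavity and derivative bounds for f: With β > 0, the piecewise rate function γ (γ(r) = K₁r for r ≤ R, γ(r) = (−((K₁+K₂)/R)(r−R)+K₁)r for R ≤ r ≤ 2R, γ(r) = −K₂ r for r > 2R, where R > 0, K₁ ≥ 0, K₂ > 0), δ := ∫₀^∞ s e^{(1/(2β))∫₀ˢ γ(v)dv} ds, and f(r) = ∫₀ʳ e^{−(1/(2β))∫₀ᵘ γ(v)dv} ( ∫_u^∞ s e^{(1/(2β))∫₀ˢ γ(v)dv} ds ) du, one has f″(r) ≤ 0 for all r ≥ 0, and consequently 0 ≤ f′(r) ≤ f′(0) = δ for all r ≥ 0, i.e. ‖f′‖_∞ = δ. -/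
open MeasureTheory Real

open Set

namespace CA

variable (R K₁ K₂ : ℝ)

lemma continuous_rateGamma (R K₁ K₂ : ℝ) (hR : 0 < R) :
    Continuous (rateGamma R K₁ K₂) := by
  unfold rateGamma
  apply Continuous.if_le
  · fun_prop
  · apply Continuous.if_le
    · fun_prop
    · fun_prop
    · fun_prop
    · fun_prop
    · intro x hx
      rw [hx]; field_simp; ring
  · fun_prop
  · fun_prop
  · intro x hx
    rw [hx]
    rw [if_pos (by linarith : R ≤ 2*R)]
    ring

lemma rateGamma_zero (R K₁ K₂ : ℝ) (hR : 0 < R) : rateGamma R K₁ K₂ 0 = 0 := by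
  simp [rateGamma, hR.le]

lemma rateGamma_top (R K₁ K₂ : ℝ) (hR : 0 < R) {v : ℝ} (hv : 2 * R ≤ v) :
    rateGamma R K₁ K₂ v = -K₂ * v := by
  unfold rateGamma
  rcases lt_or_eq_of_le hv with h | h
  · rw [if_neg (by linarith), if_neg (by linarith)]
  · have hvR : ¬ v ≤ R := by linarith
    rw [if_neg hvR, if_pos h.ge]
    rw [← h]; field_simp; ring

lemma slope (R K₁ K₂ : ℝ) (hR : 0 < R) (hK₁ : 0 ≤ K₁) (hK₂ : 0 < K₂)
    {r v : ℝ} (hr : 0 < r) (hrv : r ≤ v) :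
    rateGamma R K₁ K₂ v * r ≤ rateGamma R K₁ K₂ r * v := by
  have hq : (K₁ + K₂) / R * R = K₁ + K₂ := div_mul_cancel₀ _ hR.ne'
  have hq0 : 0 ≤ (K₁ + K₂) / R := div_nonneg (by linarith) hR.le
  have hv : 0 < v := lt_of_lt_of_le hr hrv
  unfold rateGamma
  split_ifs with h1 h2 h3 h4 h5 <;>
    nlinarith [mul_nonneg hq0 (mul_nonneg hr.le hv.le), mul_nonneg hr.le hv.le,
      mul_nonneg (mul_nonneg hq0 hr.le) hv.le,
      mul_le_mul_of_nonneg_left hrv hq0, sq_nonneg (v - r),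
      mul_nonneg (mul_nonneg (mul_nonneg hq0 (sub_nonneg.2 hrv)) hr.le) hv.le]


/-- `G u = ∫₀ᵘ γ`. -/
noncomputable def G (u : ℝ) : ℝ := ∫ v in (0:ℝ)..u, rateGamma R K₁ K₂ v

lemma hasDerivAt_G (hR : 0 < R) (u : ℝ) :
    HasDerivAt (G R K₁ K₂) (rateGamma R K₁ K₂ u) u := by
  have hc := continuous_rateGamma R K₁ K₂ hR
  exact intervalIntegral.integral_hasDerivAt_right (hc.intervalIntegrable _ _)
    (hc.stronglyMeasurableAtFilter _ _) hc.continuousAt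

lemma continuous_G (hR : 0 < R) : Continuous (G R K₁ K₂) := by
  have : Differentiable ℝ (G R K₁ K₂) := fun u => (hasDerivAt_G R K₁ K₂ hR u).differentiableAt
  exact this.continuous

lemma G_top (hR : 0 < R) {s : ℝ} (hs : 2 * R ≤ s) :
    G R K₁ K₂ s = G R K₁ K₂ (2 * R) - K₂ * (s ^ 2 - (2 * R) ^ 2) / 2 := by
  have hc := continuous_rateGamma R K₁ K₂ hR
  have h1 : G R K₁ K₂ s = G R K₁ K₂ (2 * R) + ∫ v in (2 * R)..s, rateGamma R K₁ K₂ v := by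
    rw [G, G, intervalIntegral.integral_add_adjacent_intervals
      (hc.intervalIntegrable 0 (2 * R)) (hc.intervalIntegrable (2 * R) s)]
  have h2 : ∫ v in (2 * R)..s, rateGamma R K₁ K₂ v = ∫ v in (2 * R)..s, -K₂ * v := by
    apply intervalIntegral.integral_congr
    intro v hv
    rw [uIcc_of_le hs] at hv
    exact rateGamma_top R K₁ K₂ hR hv.1
  have h3 : ∫ v in (2 * R)..s, -K₂ * v = -K₂ * ((s ^ 2 - (2 * R) ^ 2) / 2) := by
    rw [intervalIntegral.integral_const_mul, integral_id]
  rw [h1, h2, h3]; ring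

variable (β : ℝ)

/-- `φ s = s e^{c G(s)}`. -/
noncomputable def phi (s : ℝ) : ℝ :=
  s * Real.exp ((1 / (2 * β)) * ∫ v in (0:ℝ)..s, rateGamma R K₁ K₂ v)

lemma continuous_phi (hR : 0 < R) : Continuous (phi R K₁ K₂ β) :=
  continuous_id.mul ((continuous_const.mul (continuous_G R K₁ K₂ hR)).rexp)

lemma integrable_gauss {b : ℝ} (hb : 0 < b) :
    Integrable (fun s : ℝ => s * Real.exp (-b * s ^ 2)) := by
  simpa using integrable_rpow_mul_exp_neg_mul_sq hb (s := 1) (by norm_num)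

lemma integrableOn_phi (hβ : 0 < β) (hR : 0 < R) (hK₂ : 0 < K₂) (t : ℝ) :
    IntegrableOn (phi R K₁ K₂ β) (Ioi t) := by
  have hb : 0 < 1 / (2 * β) * K₂ / 2 := by positivity
  have htop : IntegrableOn (phi R K₁ K₂ β) (Ioi (2 * R)) := by
    have heq : EqOn (phi R K₁ K₂ β)
        (fun s => Real.exp ((1 / (2 * β)) * (G R K₁ K₂ (2 * R) + K₂ * (2 * R) ^ 2 / 2)) *
          (s * Real.exp (-(1 / (2 * β) * K₂ / 2) * s ^ 2))) (Ioi (2 * R)) := by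
      intro s hs
      have hGs := G_top R K₁ K₂ hR (le_of_lt hs)
      show phi R K₁ K₂ β s = _
      show s * Real.exp _ = _
      rw [← G, hGs, show (1 / (2 * β)) * (G R K₁ K₂ (2 * R) - K₂ * (s ^ 2 - (2 * R) ^ 2) / 2)
          = (1 / (2 * β)) * (G R K₁ K₂ (2 * R) + K₂ * (2 * R) ^ 2 / 2)
            + (-(1 / (2 * β) * K₂ / 2) * s ^ 2) by ring, Real.exp_add]
      ring
    refine (IntegrableOn.congr_fun ?_ heq.symm measurableSet_Ioi)
    exact ((integrable_gauss hb).const_mul _).integrableOn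
  have hmid : IntegrableOn (phi R K₁ K₂ β) (Ioc t (2 * R)) :=
    (continuous_phi R K₁ K₂ β hR).integrableOn_Ioc
  refine (hmid.union htop).mono_set ?_
  intro s hs
  rcases le_or_gt s (2 * R) with h | h
  · exact Or.inl ⟨hs, h⟩
  · exact Or.inr h


/-- `H u = ∫_{Ioi u} φ`. -/
noncomputable def Hfun (u : ℝ) : ℝ := ∫ s in Ioi u, phi R K₁ K₂ β s

lemma H_split (hβ : 0 < β) (hR : 0 < R) (hK₂ : 0 < K₂) {a b : ℝ} (hab : a ≤ b) :
    Hfun R K₁ K₂ β a = (∫ s in a..b, phi R K₁ K₂ β s) + Hfun R K₁ K₂ β b := by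
  rw [intervalIntegral.integral_of_le hab, Hfun, Hfun,
    ← setIntegral_union (Ioc_disjoint_Ioi le_rfl) measurableSet_Ioi
      ((integrableOn_phi R K₁ K₂ β hβ hR hK₂ a).mono_set Ioc_subset_Ioi_self)
      (integrableOn_phi R K₁ K₂ β hβ hR hK₂ b),
    Ioc_union_Ioi_eq_Ioi hab]

lemma H_eq (hβ : 0 < β) (hR : 0 < R) (hK₂ : 0 < K₂) (u : ℝ) :
    Hfun R K₁ K₂ β u = Hfun R K₁ K₂ β 0 - ∫ s in (0:ℝ)..u, phi R K₁ K₂ β s := by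
  rcases le_total 0 u with h | h
  · have := H_split R K₁ K₂ β hβ hR hK₂ h
    linarith
  · have := H_split R K₁ K₂ β hβ hR hK₂ h
    rw [intervalIntegral.integral_symm] at this
    rw [this]; ring

lemma hasDerivAt_H (hβ : 0 < β) (hR : 0 < R) (hK₂ : 0 < K₂) (u : ℝ) :
    HasDerivAt (Hfun R K₁ K₂ β) (-(phi R K₁ K₂ β u)) u := by
  have hc := continuous_phi R K₁ K₂ β hR
  have h1 : HasDerivAt (fun u => ∫ s in (0:ℝ)..u, phi R K₁ K₂ β s)
      (phi R K₁ K₂ β u) u :=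
    intervalIntegral.integral_hasDerivAt_right (hc.intervalIntegrable _ _)
      (hc.stronglyMeasurableAtFilter _ _) hc.continuousAt
  have h2 : HasDerivAt (fun u => Hfun R K₁ K₂ β 0 - ∫ s in (0:ℝ)..u, phi R K₁ K₂ β s)
      (-(phi R K₁ K₂ β u)) u := by
    have h3 := (hasDerivAt_const u (Hfun R K₁ K₂ β 0)).sub h1
    rw [zero_sub] at h3
    exact h3
  exact h2.congr_of_eventuallyEq
    (Filter.Eventually.of_forall fun x => H_eq R K₁ K₂ β hβ hR hK₂ x)

/-- `g = f'`. -/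
noncomputable def gfun (u : ℝ) : ℝ :=
  Real.exp (-(1 / (2 * β)) * G R K₁ K₂ u) * Hfun R K₁ K₂ β u

noncomputable def gderiv (u : ℝ) : ℝ :=
  -(1 / (2 * β)) * rateGamma R K₁ K₂ u * gfun R K₁ K₂ β u - u

lemma hasDerivAt_g (hβ : 0 < β) (hR : 0 < R) (hK₂ : 0 < K₂) (u : ℝ) :
    HasDerivAt (gfun R K₁ K₂ β) (gderiv R K₁ K₂ β u) u := by
  have hE : HasDerivAt (fun u => Real.exp (-(1 / (2 * β)) * G R K₁ K₂ u))
      ((-(1 / (2 * β)) * rateGamma R K₁ K₂ u) *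
        Real.exp (-(1 / (2 * β)) * G R K₁ K₂ u)) u := by
    have := ((hasDerivAt_G R K₁ K₂ hR u).const_mul (-(1 / (2 * β)))).exp
    simpa [mul_comm] using this
  have : HasDerivAt (gfun R K₁ K₂ β) _ u := hE.mul (hasDerivAt_H R K₁ K₂ β hβ hR hK₂ u)
  convert this using 1
  rw [gderiv, gfun, phi, ← G]
  have : Real.exp (-(1 / (2 * β)) * G R K₁ K₂ u) *
      Real.exp ((1 / (2 * β)) * G R K₁ K₂ u) = 1 := by
    rw [← Real.exp_add]; simp
  linear_combination u * this

lemma couplingF_eq : couplingF β R K₁ K₂ = fun r => ∫ u in (0:ℝ)..r, gfun R K₁ K₂ β u := rfl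

lemma continuous_g (hβ : 0 < β) (hR : 0 < R) (hK₂ : 0 < K₂) :
    Continuous (gfun R K₁ K₂ β) := by
  have : Differentiable ℝ (gfun R K₁ K₂ β) :=
    fun u => (hasDerivAt_g R K₁ K₂ β hβ hR hK₂ u).differentiableAt
  exact this.continuous

lemma deriv_couplingF (hβ : 0 < β) (hR : 0 < R) (hK₂ : 0 < K₂) :
    deriv (couplingF β R K₁ K₂) = gfun R K₁ K₂ β := by
  funext r
  rw [couplingF_eq]
  exact Continuous.deriv_integral _ (continuous_g R K₁ K₂ β hβ hR hK₂) 0 r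

lemma deriv2_couplingF (hβ : 0 < β) (hR : 0 < R) (hK₂ : 0 < K₂) (r : ℝ) :
    deriv (deriv (couplingF β R K₁ K₂)) r = gderiv R K₁ K₂ β r := by
  rw [deriv_couplingF R K₁ K₂ β hβ hR hK₂]
  exact (hasDerivAt_g R K₁ K₂ β hβ hR hK₂ r).deriv

lemma gfun_zero : gfun R K₁ K₂ β 0 = deltaConst β R K₁ K₂ := by
  rw [gfun, G, intervalIntegral.integral_same]
  simp [Hfun, phi, deltaConst]


lemma H_nonneg {r : ℝ} (hr : 0 ≤ r) : 0 ≤ Hfun R K₁ K₂ β r := by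
  apply setIntegral_nonneg measurableSet_Ioi
  intro s hs
  have : 0 ≤ s := le_trans hr (le_of_lt hs)
  exact mul_nonneg this (Real.exp_pos _).le

lemma gauss_tail {lam : ℝ} (hlam : lam < 0) (r : ℝ) :
    ∫ s in Ioi r, s * Real.exp (lam / 2 * s ^ 2)
      = -(1 / lam) * Real.exp (lam / 2 * r ^ 2) := by
  have hne : lam ≠ 0 := ne_of_lt hlam
  have hint : IntegrableOn (fun s : ℝ => s * Real.exp (lam / 2 * s ^ 2)) (Ioi r) := by
    have := integrable_gauss (b := -(lam / 2)) (by linarith)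
    simpa using this.integrableOn
  have hderiv : ∀ x ∈ Ioi r,
      HasDerivAt (fun s : ℝ => (1 / lam) * Real.exp (lam / 2 * s ^ 2))
        (x * Real.exp (lam / 2 * x ^ 2)) x := by
    intro x _
    have h1 : HasDerivAt (fun s : ℝ => lam / 2 * s ^ 2) (lam / 2 * (2 * x)) x := by
      simpa using ((hasDerivAt_pow 2 x).const_mul (lam / 2))
    have : HasDerivAt (fun s : ℝ => (1 / lam) * Real.exp (lam / 2 * s ^ 2)) _ x := (h1.exp).const_mul (1 / lam)
    convert this using 1
    field_simp
  have hcont : ContinuousWithinAt (fun s : ℝ => (1 / lam) * Real.exp (lam / 2 * s ^ 2))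
      (Ici r) r :=
    (continuous_const.mul ((continuous_const.mul (continuous_pow 2)).rexp)).continuousWithinAt
  have htend : Filter.Tendsto (fun s : ℝ => (1 / lam) * Real.exp (lam / 2 * s ^ 2))
      Filter.atTop (nhds 0) := by
    have h2 : Filter.Tendsto (fun s : ℝ => lam / 2 * s ^ 2) Filter.atTop Filter.atBot := by
      apply Filter.Tendsto.const_mul_atTop_of_neg (by linarith : lam / 2 < 0)
      exact Filter.tendsto_pow_atTop (by norm_num)
    have := (Real.tendsto_exp_atBot.comp h2).const_mul (1 / lam)
    simpa using this
  have := integral_Ioi_of_hasDerivAt_of_tendsto hcont hderiv hint htend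
  rw [this]
  ring

lemma key (hβ : 0 < β) (hR : 0 < R) (hK₁ : 0 ≤ K₁) (hK₂ : 0 < K₂)
    {r : ℝ} (hr : 0 ≤ r) : gderiv R K₁ K₂ β r ≤ 0 := by
  have hc : 0 < 1 / (2 * β) := by positivity
  have hE : 0 < Real.exp (-(1 / (2 * β)) * G R K₁ K₂ r) := Real.exp_pos _
  have hH0 : 0 ≤ Hfun R K₁ K₂ β r := H_nonneg R K₁ K₂ β hr
  rcases le_or_gt 0 (rateGamma R K₁ K₂ r) with hγ | hγ
  · rw [gderiv, gfun]
    nlinarith [mul_nonneg (mul_nonneg hc.le hγ) (mul_nonneg hE.le hH0)]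
  · have hr0 : 0 < r := by
      rcases hr.lt_or_eq with h | h
      · exact h
      · exfalso; rw [← h, rateGamma_zero R K₁ K₂ hR] at hγ; exact lt_irrefl 0 hγ
    set c := 1 / (2 * β) with hcdef
    set a := rateGamma R K₁ K₂ r / r with hadef
    have haneg : a < 0 := div_neg_of_neg_of_pos hγ hr0
    have hγa : rateGamma R K₁ K₂ r = a * r := by
      rw [hadef, div_mul_cancel₀ _ hr0.ne']
    have hca : c * a < 0 := mul_neg_of_pos_of_neg hc haneg
    -- pointwise bound on the integrand
    have hpoint : ∀ s ∈ Ioi r, phi R K₁ K₂ β s ≤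
        Real.exp (c * G R K₁ K₂ r - c * a * r ^ 2 / 2) *
          (s * Real.exp (c * a / 2 * s ^ 2)) := by
      intro s hs
      have hrs : r ≤ s := le_of_lt hs
      have hγcont := continuous_rateGamma R K₁ K₂ hR
      have hGs : G R K₁ K₂ s ≤ G R K₁ K₂ r + a * (s ^ 2 - r ^ 2) / 2 := by
        have h1 : G R K₁ K₂ s = G R K₁ K₂ r + ∫ v in r..s, rateGamma R K₁ K₂ v := by
          rw [G, G, intervalIntegral.integral_add_adjacent_intervals
            (hγcont.intervalIntegrable 0 r) (hγcont.intervalIntegrable r s)]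
        have h2 : ∫ v in r..s, rateGamma R K₁ K₂ v ≤ ∫ v in r..s, a * v := by
          apply intervalIntegral.integral_mono_on hrs (hγcont.intervalIntegrable r s)
            ((continuous_const.mul continuous_id).intervalIntegrable r s)
          intro v hv
          have hsl := slope R K₁ K₂ hR hK₁ hK₂ hr0 hv.1
          show rateGamma R K₁ K₂ v ≤ a * v
          rw [hadef, div_mul_eq_mul_div, le_div_iff₀ hr0]
          linarith
        have h3 : ∫ v in r..s, a * v = a * ((s ^ 2 - r ^ 2) / 2) := by
          rw [intervalIntegral.integral_const_mul, integral_id]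
        rw [h1]
        rw [h3] at h2
        linarith
      have hs0 : 0 < s := lt_trans hr0 hs
      calc phi R K₁ K₂ β s = s * Real.exp (c * G R K₁ K₂ s) := rfl
        _ ≤ s * Real.exp (c * (G R K₁ K₂ r + a * (s ^ 2 - r ^ 2) / 2)) := by
            apply mul_le_mul_of_nonneg_left _ hs0.le
            apply Real.exp_le_exp.2
            exact mul_le_mul_of_nonneg_left hGs hc.le
        _ = Real.exp (c * G R K₁ K₂ r - c * a * r ^ 2 / 2) *
              (s * Real.exp (c * a / 2 * s ^ 2)) := by
            rw [show c * (G R K₁ K₂ r + a * (s ^ 2 - r ^ 2) / 2)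
              = (c * G R K₁ K₂ r - c * a * r ^ 2 / 2) + c * a / 2 * s ^ 2 by ring,
              Real.exp_add]
            ring
    have hint2 : IntegrableOn (fun s => Real.exp (c * G R K₁ K₂ r - c * a * r ^ 2 / 2) *
        (s * Real.exp (c * a / 2 * s ^ 2))) (Ioi r) := by
      have := integrable_gauss (b := -(c * a / 2)) (by linarith)
      simpa using (this.const_mul _).integrableOn
    have hmono := setIntegral_mono_on
      (integrableOn_phi R K₁ K₂ β hβ hR hK₂ r) hint2 measurableSet_Ioi hpoint
    have htail : ∫ s in Ioi r, Real.exp (c * G R K₁ K₂ r - c * a * r ^ 2 / 2) *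
        (s * Real.exp (c * a / 2 * s ^ 2))
        = Real.exp (c * G R K₁ K₂ r - c * a * r ^ 2 / 2) *
          (-(1 / (c * a)) * Real.exp (c * a / 2 * r ^ 2)) := by
      rw [integral_const_mul, gauss_tail hca r]
    have hHb : Hfun R K₁ K₂ β r ≤ -(1 / (c * a)) * Real.exp (c * G R K₁ K₂ r) := by
      have : Hfun R K₁ K₂ β r ≤ Real.exp (c * G R K₁ K₂ r - c * a * r ^ 2 / 2) *
          (-(1 / (c * a)) * Real.exp (c * a / 2 * r ^ 2)) := by
        rw [← htail]; exact hmono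
      refine le_trans this (le_of_eq ?_)
      rw [show Real.exp (c * G R K₁ K₂ r - c * a * r ^ 2 / 2) *
            (-(1 / (c * a)) * Real.exp (c * a / 2 * r ^ 2))
          = -(1 / (c * a)) * (Real.exp (c * G R K₁ K₂ r - c * a * r ^ 2 / 2) *
            Real.exp (c * a / 2 * r ^ 2)) by ring, ← Real.exp_add,
        show c * G R K₁ K₂ r - c * a * r ^ 2 / 2 + c * a / 2 * r ^ 2 = c * G R K₁ K₂ r by ring]
    -- now conclude
    have hEexp : Real.exp (-c * G R K₁ K₂ r) * Real.exp (c * G R K₁ K₂ r) = 1 := by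
      rw [← Real.exp_add]; simp
    have hHb2 : c * (-a) * Hfun R K₁ K₂ β r ≤ Real.exp (c * G R K₁ K₂ r) := by
      have hpos : 0 < c * (-a) := mul_pos hc (neg_pos.2 haneg)
      have := mul_le_mul_of_nonneg_left hHb hpos.le
      refine le_trans this (le_of_eq ?_)
      have hne2 : c * a ≠ 0 := ne_of_lt hca
      field_simp
      exact div_self haneg.ne
    rw [gderiv, gfun, hγa]
    have hfinal := mul_le_mul_of_nonneg_right hHb2
      (mul_nonneg hr (Real.exp_pos (-c * G R K₁ K₂ r)).le)
    nlinarith [hEexp, hfinal, hr]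


lemma gfun_nonneg (hβ : 0 < β) {r : ℝ} (hr : 0 ≤ r) : 0 ≤ gfun R K₁ K₂ β r :=
  mul_nonneg (Real.exp_pos _).le (H_nonneg R K₁ K₂ β hr)

end CA

/-- Concavity and derivative bounds for `f`: `f″(r) ≤ 0` for all `r ≥ 0`, and
consequently `0 ≤ f′(r) ≤ f′(0) = δ` for all `r ≥ 0`, i.e. `‖f′‖_∞ = δ`. -/
theorem couplingF_concave_deriv_bounds (β R K₁ K₂ : ℝ)
    (hβ : 0 < β) (hR : 0 < R) (hK₁ : 0 ≤ K₁) (hK₂ : 0 < K₂) :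
    (∀ r ≥ (0:ℝ), deriv (deriv (couplingF β R K₁ K₂)) r ≤ 0) ∧
    deriv (couplingF β R K₁ K₂) 0 = deltaConst β R K₁ K₂ ∧
    (∀ r ≥ (0:ℝ),
      0 ≤ deriv (couplingF β R K₁ K₂) r ∧
      deriv (couplingF β R K₁ K₂) r ≤ deltaConst β R K₁ K₂) := by
  have hd := CA.deriv_couplingF R K₁ K₂ β hβ hR hK₂
  refine ⟨?_, ?_, ?_⟩
  · intro r hr
    rw [CA.deriv2_couplingF R K₁ K₂ β hβ hR hK₂ r]
    exact CA.key R K₁ K₂ β hβ hR hK₁ hK₂ hr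
  · rw [hd]; exact CA.gfun_zero R K₁ K₂ β
  · intro r hr
    constructor
    · rw [hd]; exact CA.gfun_nonneg R K₁ K₂ β hβ hr
    · rw [hd, ← CA.gfun_zero R K₁ K₂ β]
      have hanti : AntitoneOn (CA.gfun R K₁ K₂ β) (Set.Ici 0) := by
        apply antitoneOn_of_deriv_nonpos (convex_Ici 0)
        · exact (CA.continuous_g R K₁ K₂ β hβ hR hK₂).continuousOn
        · intro x _
          exact (CA.hasDerivAt_g R K₁ K₂ β hβ hR hK₂ x).differentiableAt.differentiableWithinAt
        · intro x hx
          rw [interior_Ici] at hx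
          rw [(CA.hasDerivAt_g R K₁ K₂ β hβ hR hK₂ x).deriv]
          exact CA.key R K₁ K₂ β hβ hR hK₁ hK₂ (le_of_lt hx)
      exact hanti Set.self_mem_Ici hr hr
end

section
/- Two-sided linear bounds for f: With β > 0, the piecewise rate function γ (γ(r) = K₁r for r ≤ R, γ(r) = (−((K₁+K₂)/R)(r−R)+K₁)r for R ≤ r ≤ 2R, γ(r) = −K₂ r for r > 2R, where R > 0, K₁ ≥ 0, K₂ > 0), δ := ∫₀^∞ s e^{(1/(2β))∫₀ˢ γ(v)dv} ds, and f(r) = ∫₀ʳ e^{−(1/(2β))∫₀ᵘ γ(v)dv} ( ∫_u^∞ s e^{(1/(2β))∫₀ˢ γ(v)dv} ds ) du, one has (2β/K₂) r ≤ f(r) ≤ δ r for all r ≥ 0; in particular the constant c_E := K₂δ/(2β) satisfies c_E ≥ 1. -/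
open MeasureTheory Real

open Set Filter

noncomputable def psiAux (R K₁ K₂ : ℝ) (y : ℝ) : ℝ :=
  if y ≤ R ^ 2 then K₁ / 2
  else if y ≤ (2 * R) ^ 2 then (K₁ - (K₁ + K₂) / R * (Real.sqrt y - R)) / 2
  else -K₂ / 2

section lemmas
variable {β R K₁ K₂ : ℝ} (hβ : 0 < β) (hR : 0 < R) (hK₁ : 0 ≤ K₁) (hK₂ : 0 < K₂)

lemma psi_cont (hR : 0 < R) : Continuous (psiAux R K₁ K₂) := by
  unfold psiAux
  apply Continuous.if_le
  · exact continuous_const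
  · apply Continuous.if_le
    · exact (continuous_const.sub ((continuous_const.mul
        (Real.continuous_sqrt.sub continuous_const)))).div_const 2
    · exact continuous_const
    · exact continuous_id
    · exact continuous_const
    · intro y hy
      rw [hy, Real.sqrt_sq (by positivity : (0:ℝ) ≤ 2*R)]
      field_simp; ring
  · exact continuous_id
  · exact continuous_const
  · intro y hy
    rw [hy]
    rw [if_pos (by nlinarith : (R:ℝ)^2 ≤ (2*R)^2), Real.sqrt_sq hR.le]
    ring

lemma gamma_cont (hR : 0 < R) : Continuous (rateGamma R K₁ K₂) := by
  unfold rateGamma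
  apply Continuous.if_le
  · exact continuous_const.mul continuous_id
  · apply Continuous.if_le
    · fun_prop
    · fun_prop
    · exact continuous_id
    · exact continuous_const
    · intro r hr
      rw [hr]
      field_simp; ring
  · exact continuous_id
  · exact continuous_const
  · intro r hr
    rw [hr, if_pos (by linarith : R ≤ 2*R)]
    ring

lemma gamma_eq_psi (hR : 0 < R) {v : ℝ} (hv : 0 ≤ v) :
    rateGamma R K₁ K₂ v = 2 * v * psiAux R K₁ K₂ (v ^ 2) := by
  unfold rateGamma psiAux
  have h1 : v ≤ R ↔ v ^ 2 ≤ R ^ 2 := by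
    constructor
    · intro h; nlinarith
    · intro h; nlinarith
  have h2 : v ≤ 2 * R ↔ v ^ 2 ≤ (2 * R) ^ 2 := by
    constructor
    · intro h; nlinarith
    · intro h; nlinarith
  have hs : Real.sqrt (v ^ 2) = v := Real.sqrt_sq hv
  by_cases hc1 : v ≤ R
  · rw [if_pos hc1, if_pos (h1.mp hc1)]; ring
  · rw [if_neg hc1, if_neg (fun h => hc1 (h1.mpr h))]
    by_cases hc2 : v ≤ 2 * R
    · rw [if_pos (h2.mp hc2), if_pos hc2, hs]; ring
    · rw [if_neg hc2, if_neg (fun h => hc2 (h2.mpr h))]; ring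

lemma psi_ge (hR : 0 < R) (hK₁ : 0 ≤ K₁) (hK₂ : 0 < K₂) (y : ℝ) :
    -K₂ / 2 ≤ psiAux R K₁ K₂ y := by
  unfold psiAux
  split_ifs with h1 h2
  · linarith
  · have hy0 : (0:ℝ) ≤ y := by nlinarith
    have hsy : Real.sqrt y ≤ 2 * R := by
      rw [show (2*R) = Real.sqrt ((2*R)^2) from (Real.sqrt_sq (by positivity)).symm]
      exact Real.sqrt_le_sqrt h2
    have : (K₁ + K₂) / R * (Real.sqrt y - R) ≤ (K₁ + K₂) / R * R := by
      apply mul_le_mul_of_nonneg_left (by linarith) (by positivity)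
    have hRne : (R:ℝ) ≠ 0 := hR.ne'
    rw [div_mul_cancel₀ _ hRne] at this
    linarith
  · exact le_refl _

lemma psi_anti (hR : 0 < R) (hK₁ : 0 ≤ K₁) (hK₂ : 0 < K₂) {y z : ℝ} (hyz : y ≤ z) :
    psiAux R K₁ K₂ z ≤ psiAux R K₁ K₂ y := by
  have hge := psi_ge hR hK₁ hK₂ (K₂ := K₂)
  unfold psiAux
  by_cases hz1 : z ≤ R ^ 2
  · rw [if_pos hz1, if_pos (le_trans hyz hz1)]
  · rw [if_neg hz1]
    by_cases hz2 : z ≤ (2*R)^2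
    · rw [if_pos hz2]
      by_cases hy1 : y ≤ R ^ 2
      · rw [if_pos hy1]
        have : R ≤ Real.sqrt z := by
          rw [show R = Real.sqrt (R^2) from (Real.sqrt_sq hR.le).symm]
          exact Real.sqrt_le_sqrt (by nlinarith)
        have : 0 ≤ (K₁ + K₂)/R * (Real.sqrt z - R) := by
          apply mul_nonneg (by positivity) (by linarith)
        linarith
      · rw [if_neg hy1, if_pos (le_trans hyz hz2)]
        have : Real.sqrt y ≤ Real.sqrt z := Real.sqrt_le_sqrt hyz
        have : (K₁ + K₂)/R * (Real.sqrt y - R) ≤ (K₁ + K₂)/R * (Real.sqrt z - R) := by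
          apply mul_le_mul_of_nonneg_left (by linarith) (by positivity)
        linarith
    · rw [if_neg hz2]
      have := psi_ge hR hK₁ hK₂ y
      unfold psiAux at this
      exact this

end lemmas


section lemmas
variable {β R K₁ K₂ : ℝ}

lemma psi_le (hR : 0 < R) (hK₁ : 0 ≤ K₁) (hK₂ : 0 < K₂) (y : ℝ) :
    psiAux R K₁ K₂ y ≤ K₁ / 2 := by
  unfold psiAux
  split_ifs with h1 h2
  · exact le_refl _
  · have : R ≤ Real.sqrt y := by
      rw [show R = Real.sqrt (R^2) from (Real.sqrt_sq hR.le).symm]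
      exact Real.sqrt_le_sqrt (by nlinarith)
    have : 0 ≤ (K₁ + K₂)/R * (Real.sqrt y - R) := mul_nonneg (by positivity) (by linarith)
    linarith
  · linarith

lemma Gamma_eq (hR : 0 < R) {s : ℝ} (hs : 0 ≤ s) :
    (∫ v in (0:ℝ)..s, rateGamma R K₁ K₂ v) = ∫ y in (0:ℝ)..s^2, psiAux R K₁ K₂ y := by
  have h := intervalIntegral.integral_comp_smul_deriv (a := 0) (b := s)
      (f := fun v => v^2) (f' := fun v => 2*v) (g := psiAux R K₁ K₂)
      (fun x _ => by simpa using (hasDerivAt_pow 2 x)) (by fun_prop) (psi_cont hR)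
  simp only [ne_eq, OfNat.ofNat_ne_zero, not_false_eq_true, zero_pow] at h
  rw [← h]
  apply intervalIntegral.integral_congr
  intro v hv
  rw [uIcc_of_le hs] at hv
  simp only [smul_eq_mul]
  exact gamma_eq_psi hR hv.1

lemma psi_intervalInt (hR : 0 < R) (a b : ℝ) :
    IntervalIntegrable (psiAux R K₁ K₂) volume a b := (psi_cont hR).intervalIntegrable a b

lemma Gamma_shift (hR : 0 < R) (hK₁ : 0 ≤ K₁) (hK₂ : 0 < K₂) {u t : ℝ} (hu : 0 ≤ u) (ht : 0 ≤ t) :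
    (∫ v in (0:ℝ)..Real.sqrt (t^2 + u^2), rateGamma R K₁ K₂ v)
      - (∫ v in (0:ℝ)..u, rateGamma R K₁ K₂ v)
    = ∫ y in (0:ℝ)..t^2, psiAux R K₁ K₂ (y + u^2) := by
  rw [Gamma_eq hR (Real.sqrt_nonneg _), Gamma_eq hR hu,
    Real.sq_sqrt (by positivity : (0:ℝ) ≤ t^2 + u^2)]
  rw [intervalIntegral.integral_comp_add_right (fun y => psiAux R K₁ K₂ y) (u^2)]
  have := intervalIntegral.integral_add_adjacent_intervals
    (psi_intervalInt hR (K₁ := K₁) (K₂ := K₂) 0 (u^2)) (psi_intervalInt hR (u^2) (t^2+u^2))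
  simp only [zero_add]
  linarith [this]

lemma key_upper (hR : 0 < R) (hK₁ : 0 ≤ K₁) (hK₂ : 0 < K₂) {u t : ℝ} (hu : 0 ≤ u) (ht : 0 ≤ t) :
    (∫ v in (0:ℝ)..Real.sqrt (t^2 + u^2), rateGamma R K₁ K₂ v)
      - (∫ v in (0:ℝ)..u, rateGamma R K₁ K₂ v)
    ≤ ∫ v in (0:ℝ)..t, rateGamma R K₁ K₂ v := by
  rw [Gamma_shift hR hK₁ hK₂ hu ht, Gamma_eq hR ht]
  apply intervalIntegral.integral_mono_on (by positivity)
  · exact ((psi_cont hR).comp (by fun_prop)).intervalIntegrable _ _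
  · exact psi_intervalInt hR _ _
  · intro y hy
    exact psi_anti hR hK₁ hK₂ (by nlinarith)

lemma key_lower (hR : 0 < R) (hK₁ : 0 ≤ K₁) (hK₂ : 0 < K₂) {u t : ℝ} (hu : 0 ≤ u) (ht : 0 ≤ t) :
    -(K₂ / 2) * t^2
    ≤ (∫ v in (0:ℝ)..Real.sqrt (t^2 + u^2), rateGamma R K₁ K₂ v)
      - (∫ v in (0:ℝ)..u, rateGamma R K₁ K₂ v) := by
  rw [Gamma_shift hR hK₁ hK₂ hu ht]
  have h := intervalIntegral.integral_mono_on (a := 0) (b := t^2) (by positivity)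
    (intervalIntegrable_const (μ := volume) (c := -K₂/2))
    (((psi_cont hR).comp (by fun_prop : Continuous (fun y : ℝ => y + u^2))).intervalIntegrable _ _)
    (fun y _ => psi_ge hR hK₁ hK₂ (y + u^2))
  have hc : (∫ _y in (0:ℝ)..t^2, (-K₂/2 : ℝ)) = -(K₂/2) * t^2 := by
    simp; ring
  rw [← hc]
  simpa [Function.comp] using h

lemma Gamma_upper_bd (hR : 0 < R) (hK₁ : 0 ≤ K₁) (hK₂ : 0 < K₂) {t : ℝ} (ht : 0 ≤ t) :
    (∫ v in (0:ℝ)..t, rateGamma R K₁ K₂ v)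
      ≤ 2 * R^2 * (K₁ + K₂) - K₂ / 2 * t^2 := by
  rw [Gamma_eq hR ht]
  set x := t^2 with hx
  have hx0 : 0 ≤ x := by positivity
  by_cases hc : x ≤ (2*R)^2
  · have h := intervalIntegral.integral_mono_on (a := 0) (b := x) hx0
      (psi_intervalInt hR _ _) (intervalIntegrable_const (μ := volume) (c := K₁/2))
      (fun y _ => psi_le hR hK₁ hK₂ y)
    simp only [intervalIntegral.integral_const, smul_eq_mul, sub_zero] at h
    nlinarith
  · push_neg at hc
    have hsplit := intervalIntegral.integral_add_adjacent_intervals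
      (psi_intervalInt hR (K₁ := K₁) (K₂ := K₂) 0 ((2*R)^2)) (psi_intervalInt hR ((2*R)^2) x)
    have h1 := intervalIntegral.integral_mono_on (a := 0) (b := (2*R)^2) (by positivity)
      (psi_intervalInt hR _ _) (intervalIntegrable_const (μ := volume) (c := K₁/2))
      (fun y _ => psi_le hR hK₁ hK₂ y)
    have hpsi4R : psiAux R K₁ K₂ ((2*R)^2) = -K₂/2 := by
      unfold psiAux
      rw [if_neg (by nlinarith), if_pos le_rfl, Real.sqrt_sq (by positivity)]
      field_simp; ring
    have h2 := intervalIntegral.integral_mono_on (a := (2*R)^2) (b := x) hc.le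
      (psi_intervalInt hR _ _) (intervalIntegrable_const (μ := volume) (c := -K₂/2))
      (fun y hy => by rw [← hpsi4R]; exact psi_anti hR hK₁ hK₂ hy.1)
    simp only [intervalIntegral.integral_const, smul_eq_mul, sub_zero] at h1 h2
    nlinarith

end lemmas


section part2
variable {β R K₁ K₂ : ℝ}

/-- Γ as a function. -/
noncomputable abbrev GammaInt (R K₁ K₂ : ℝ) (s : ℝ) : ℝ := ∫ v in (0:ℝ)..s, rateGamma R K₁ K₂ v

lemma Gamma_cont (hR : 0 < R) : Continuous (GammaInt R K₁ K₂) :=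
  intervalIntegral.continuous_primitive (fun a b => (gamma_cont hR).intervalIntegrable a b) 0

/-- The Gaussian integral on Ioi 0. -/
lemma gauss_integral {c : ℝ} (hc : 0 < c) :
    ∫ t in Ioi (0:ℝ), t * Real.exp (-c * t^2) = 1/(2*c) := by
  have hderiv : ∀ x ∈ Ici (0:ℝ),
      HasDerivAt (fun t => -(1/(2*c)) * Real.exp (-c * t^2)) (x * Real.exp (-c * x^2)) x := by
    intro x _
    have h1 : HasDerivAt (fun t : ℝ => -c * t^2) (-c * (2*x)) x := by
      simpa using ((hasDerivAt_pow 2 x).const_mul (-c))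
    have h2 := (Real.hasDerivAt_exp (-c * x^2)).comp x h1
    have h3 := h2.const_mul (-(1/(2*c)))
    refine h3.congr_deriv ?_
    field_simp
  have hint : IntegrableOn (fun x : ℝ => x * Real.exp (-c * x^2)) (Ioi 0) :=
    (integrable_mul_exp_neg_mul_sq hc).integrableOn
  have htend : Tendsto (fun t => -(1/(2*c)) * Real.exp (-c * t^2)) atTop (nhds 0) := by
    have h1 : Tendsto (fun t : ℝ => -c * t^2) atTop atBot := by
      apply Tendsto.const_mul_atTop_of_neg (by linarith : -c < 0)
      exact tendsto_pow_atTop (by norm_num)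
    have := (Real.tendsto_exp_atBot).comp h1
    have h2 := this.const_mul (-(1/(2*c)))
    simpa using h2
  have := integral_Ioi_of_hasDerivAt_of_tendsto' hderiv hint htend
  rw [this]
  simp

lemma integrableOn_of_le_gauss {f : ℝ → ℝ} {C c : ℝ} (hc : 0 < c) (hC : 0 ≤ C)
    (hcont : Continuous f) (hnn : ∀ t ∈ Ioi (0:ℝ), 0 ≤ f t)
    (hle : ∀ t ∈ Ioi (0:ℝ), f t ≤ C * (t * Real.exp (-c * t^2))) :
    IntegrableOn f (Ioi (0:ℝ)) := by
  have hg : IntegrableOn (fun t : ℝ => C * (t * Real.exp (-c * t^2))) (Ioi 0) :=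
    ((integrable_mul_exp_neg_mul_sq hc).const_mul C).integrableOn
  apply Integrable.mono hg hcont.aestronglyMeasurable
  rw [ae_restrict_iff' measurableSet_Ioi]
  filter_upwards with t ht
  rw [Real.norm_eq_abs, Real.norm_eq_abs, abs_of_nonneg (hnn t ht),
    abs_of_nonneg (mul_nonneg hC (mul_nonneg (le_of_lt (mem_Ioi.mp ht)) (Real.exp_nonneg _)))]
  exact hle t ht


lemma sqrt_image (hu : 0 ≤ u) :
    (fun t : ℝ => Real.sqrt (t^2 + u^2)) '' Ioi (0:ℝ) = Ioi u := by
  ext s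
  constructor
  · rintro ⟨t, ht, rfl⟩
    rw [mem_Ioi] at ht ⊢
    calc u = Real.sqrt (u^2) := (Real.sqrt_sq hu).symm
    _ < Real.sqrt (t^2 + u^2) := Real.sqrt_lt_sqrt (by positivity) (by nlinarith)
  · intro hs
    rw [mem_Ioi] at hs
    have hs0 : 0 < s := lt_of_le_of_lt hu hs
    have hpos : 0 < s^2 - u^2 := by nlinarith
    refine ⟨Real.sqrt (s^2 - u^2), mem_Ioi.mpr (Real.sqrt_pos.mpr hpos), ?_⟩
    show Real.sqrt (Real.sqrt (s^2-u^2) ^ 2 + u^2) = s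
    rw [Real.sq_sqrt hpos.le]
    rw [show s^2 - u^2 + u^2 = s^2 by ring, Real.sqrt_sq hs0.le]

lemma sqrt_hasDeriv {u : ℝ} {t : ℝ} (ht : 0 < t) :
    HasDerivAt (fun t : ℝ => Real.sqrt (t^2 + u^2)) (t / Real.sqrt (t^2 + u^2)) t := by
  have hpos : 0 < t^2 + u^2 := by positivity
  have h1 : HasDerivAt (fun t : ℝ => t^2 + u^2) (2*t) t := by
    simpa using (hasDerivAt_pow 2 t).add_const (u^2)
  have h2 := (Real.hasDerivAt_sqrt hpos.ne').comp t h1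
  refine h2.congr_deriv ?_
  have : Real.sqrt (t^2+u^2) ≠ 0 := by positivity
  field_simp

lemma subst_lemma (hu : 0 ≤ u) (g : ℝ → ℝ) :
    ∫ s in Ioi u, s * g s
      = ∫ t in Ioi (0:ℝ), t * g (Real.sqrt (t^2 + u^2)) := by
  rw [← sqrt_image hu]
  rw [integral_image_eq_integral_abs_deriv_smul measurableSet_Ioi
    (fun t ht => (sqrt_hasDeriv (mem_Ioi.mp ht)).hasDerivWithinAt)
    (fun t₁ h₁ t₂ h₂ he => by
      rw [mem_Ioi] at h₁ h₂
      have e1 : t₁^2 + u^2 = t₂^2 + u^2 := by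
        have := congrArg (fun x => x^2) he
        simpa [Real.sq_sqrt (by positivity : (0:ℝ) ≤ t₁^2+u^2),
          Real.sq_sqrt (by positivity : (0:ℝ) ≤ t₂^2+u^2)] using this
      nlinarith)
    (fun s => s * g s)]
  apply setIntegral_congr_fun measurableSet_Ioi
  intro t ht
  rw [mem_Ioi] at ht
  have hpos : (0:ℝ) < Real.sqrt (t^2 + u^2) := Real.sqrt_pos.mpr (by positivity)
  show |t / Real.sqrt (t^2+u^2)| • (Real.sqrt (t^2+u^2) * g (Real.sqrt (t^2+u^2)))
      = t * g (Real.sqrt (t^2+u^2))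
  rw [abs_of_nonneg (by positivity : (0:ℝ) ≤ t / Real.sqrt (t^2+u^2))]
  rw [smul_eq_mul]
  field_simp


variable (hβ : 0 < β) (hR : 0 < R) (hK₁ : 0 ≤ K₁) (hK₂ : 0 < K₂)

lemma h_cont (hR : 0 < R) :
    Continuous (fun s : ℝ => s * Real.exp ((1/(2*β)) * GammaInt R K₁ K₂ s)) :=
  continuous_id.mul (Real.continuous_exp.comp (continuous_const.mul (Gamma_cont hR)))

lemma h_le_gauss (hβ : 0 < β) (hR : 0 < R) (hK₁ : 0 ≤ K₁) (hK₂ : 0 < K₂) :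
    ∀ s ∈ Ioi (0:ℝ), s * Real.exp ((1/(2*β)) * GammaInt R K₁ K₂ s)
      ≤ Real.exp ((1/(2*β)) * (2*R^2*(K₁+K₂))) * (s * Real.exp (-(K₂/(4*β)) * s^2)) := by
  intro s hs
  rw [mem_Ioi] at hs
  have h1 := Gamma_upper_bd hR hK₁ hK₂ hs.le
  have h2 : (1/(2*β)) * GammaInt R K₁ K₂ s
      ≤ (1/(2*β)) * (2*R^2*(K₁+K₂)) + (-(K₂/(4*β)) * s^2) := by
    have h3 := mul_le_mul_of_nonneg_left h1 (by positivity : (0:ℝ) ≤ 1/(2*β))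
    have h4 : (1/(2*β)) * (2*R^2*(K₁+K₂) - K₂/2 * s^2)
        = (1/(2*β)) * (2*R^2*(K₁+K₂)) + (-(K₂/(4*β)) * s^2) := by
      field_simp
      ring
    linarith [h4 ▸ h3]
  calc s * Real.exp ((1/(2*β)) * GammaInt R K₁ K₂ s)
      ≤ s * Real.exp ((1/(2*β)) * (2*R^2*(K₁+K₂)) + (-(K₂/(4*β)) * s^2)) :=
        mul_le_mul_of_nonneg_left (Real.exp_le_exp.mpr h2) hs.le
    _ = Real.exp ((1/(2*β)) * (2*R^2*(K₁+K₂))) * (s * Real.exp (-(K₂/(4*β)) * s^2)) := by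
        rw [Real.exp_add]; ring

lemma h_int (hβ : 0 < β) (hR : 0 < R) (hK₁ : 0 ≤ K₁) (hK₂ : 0 < K₂) :
    IntegrableOn (fun s : ℝ => s * Real.exp ((1/(2*β)) * GammaInt R K₁ K₂ s)) (Ioi 0) :=
  integrableOn_of_le_gauss (by positivity : (0:ℝ) < K₂/(4*β)) (Real.exp_nonneg _)
    (h_cont hR) (fun t ht => mul_nonneg (le_of_lt (mem_Ioi.mp ht)) (Real.exp_nonneg _))
    (h_le_gauss hβ hR hK₁ hK₂)

lemma inner_cont (hR : 0 < R) (u : ℝ) :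
    Continuous (fun t : ℝ =>
      t * Real.exp ((1/(2*β)) * GammaInt R K₁ K₂ (Real.sqrt (t^2 + u^2)))) := by
  apply continuous_id.mul
  apply Real.continuous_exp.comp
  apply continuous_const.mul
  exact (Gamma_cont hR).comp (Real.continuous_sqrt.comp (by fun_prop))

lemma inner_le (hβ : 0 < β) (hR : 0 < R) (hK₁ : 0 ≤ K₁) (hK₂ : 0 < K₂) {u : ℝ} (hu : 0 ≤ u) :
    ∀ t ∈ Ioi (0:ℝ),
      t * Real.exp ((1/(2*β)) * GammaInt R K₁ K₂ (Real.sqrt (t^2 + u^2)))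
      ≤ Real.exp ((1/(2*β)) * GammaInt R K₁ K₂ u)
          * (t * Real.exp ((1/(2*β)) * GammaInt R K₁ K₂ t)) := by
  intro t ht
  rw [mem_Ioi] at ht
  have hk := key_upper hR hK₁ hK₂ hu ht.le
  have hb : (0:ℝ) ≤ 1/(2*β) := by positivity
  have h2 : (1/(2*β)) * GammaInt R K₁ K₂ (Real.sqrt (t^2+u^2))
      ≤ (1/(2*β)) * GammaInt R K₁ K₂ u + (1/(2*β)) * GammaInt R K₁ K₂ t := by
    nlinarith [mul_le_mul_of_nonneg_left hk hb]
  calc t * Real.exp ((1/(2*β)) * GammaInt R K₁ K₂ (Real.sqrt (t^2+u^2)))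
      ≤ t * Real.exp ((1/(2*β)) * GammaInt R K₁ K₂ u + (1/(2*β)) * GammaInt R K₁ K₂ t) :=
        mul_le_mul_of_nonneg_left (Real.exp_le_exp.mpr h2) ht.le
    _ = _ := by rw [Real.exp_add]; ring

lemma inner_int (hβ : 0 < β) (hR : 0 < R) (hK₁ : 0 ≤ K₁) (hK₂ : 0 < K₂) {u : ℝ} (hu : 0 ≤ u) :
    IntegrableOn (fun t : ℝ =>
      t * Real.exp ((1/(2*β)) * GammaInt R K₁ K₂ (Real.sqrt (t^2 + u^2)))) (Ioi 0) := by
  apply integrableOn_of_le_gauss (C := Real.exp ((1/(2*β)) * GammaInt R K₁ K₂ u)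
      * Real.exp ((1/(2*β)) * (2*R^2*(K₁+K₂))))
    (by positivity : (0:ℝ) < K₂/(4*β)) (by positivity) (inner_cont hR u)
    (fun t ht => mul_nonneg (le_of_lt (mem_Ioi.mp ht)) (Real.exp_nonneg _))
  intro t ht
  calc t * Real.exp ((1/(2*β)) * GammaInt R K₁ K₂ (Real.sqrt (t^2 + u^2)))
      ≤ Real.exp ((1/(2*β)) * GammaInt R K₁ K₂ u)
          * (t * Real.exp ((1/(2*β)) * GammaInt R K₁ K₂ t)) := inner_le hβ hR hK₁ hK₂ hu t ht
    _ ≤ Real.exp ((1/(2*β)) * GammaInt R K₁ K₂ u)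
          * (Real.exp ((1/(2*β)) * (2*R^2*(K₁+K₂))) * (t * Real.exp (-(K₂/(4*β)) * t^2))) :=
        mul_le_mul_of_nonneg_left (h_le_gauss hβ hR hK₁ hK₂ t ht) (Real.exp_nonneg _)
    _ = _ := by ring

lemma I_upper (hβ : 0 < β) (hR : 0 < R) (hK₁ : 0 ≤ K₁) (hK₂ : 0 < K₂) {u : ℝ} (hu : 0 ≤ u) :
    (∫ s in Ioi u, s * Real.exp ((1/(2*β)) * GammaInt R K₁ K₂ s))
      ≤ Real.exp ((1/(2*β)) * GammaInt R K₁ K₂ u)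
        * ∫ s in Ioi (0:ℝ), s * Real.exp ((1/(2*β)) * GammaInt R K₁ K₂ s) := by
  rw [subst_lemma hu (fun s => Real.exp ((1/(2*β)) * GammaInt R K₁ K₂ s))]
  rw [← MeasureTheory.integral_const_mul]
  exact setIntegral_mono_on (inner_int hβ hR hK₁ hK₂ hu)
    ((h_int hβ hR hK₁ hK₂).const_mul _) measurableSet_Ioi (inner_le hβ hR hK₁ hK₂ hu)

lemma I_lower (hβ : 0 < β) (hR : 0 < R) (hK₁ : 0 ≤ K₁) (hK₂ : 0 < K₂) {u : ℝ} (hu : 0 ≤ u) :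
    Real.exp ((1/(2*β)) * GammaInt R K₁ K₂ u) * (2*β/K₂)
      ≤ ∫ s in Ioi u, s * Real.exp ((1/(2*β)) * GammaInt R K₁ K₂ s) := by
  rw [subst_lemma hu (fun s => Real.exp ((1/(2*β)) * GammaInt R K₁ K₂ s))]
  have hgauss := gauss_integral (by positivity : (0:ℝ) < K₂/(4*β))
  have hval : (1:ℝ)/(2*(K₂/(4*β))) = 2*β/K₂ := by field_simp; ring
  have hmono : Real.exp ((1/(2*β)) * GammaInt R K₁ K₂ u)
      * ∫ t in Ioi (0:ℝ), t * Real.exp (-(K₂/(4*β)) * t^2)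
      ≤ ∫ t in Ioi (0:ℝ),
          t * Real.exp ((1/(2*β)) * GammaInt R K₁ K₂ (Real.sqrt (t^2 + u^2))) := by
    rw [← MeasureTheory.integral_const_mul]
    apply setIntegral_mono_on
      (((integrable_mul_exp_neg_mul_sq (by positivity : (0:ℝ) < K₂/(4*β))).const_mul
        _).integrableOn)
      (inner_int hβ hR hK₁ hK₂ hu) measurableSet_Ioi
    intro t ht
    rw [mem_Ioi] at ht
    have hk := key_lower hR hK₁ hK₂ hu ht.le
    have hb : (0:ℝ) ≤ 1/(2*β) := by positivity
    have h2 : (1/(2*β)) * GammaInt R K₁ K₂ u + (-(K₂/(4*β)) * t^2)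
        ≤ (1/(2*β)) * GammaInt R K₁ K₂ (Real.sqrt (t^2+u^2)) := by
      have h3 := mul_le_mul_of_nonneg_left hk hb
      have h4 : (1/(2*β)) * (-(K₂/2) * t^2) = -(K₂/(4*β)) * t^2 := by field_simp; ring
      nlinarith [h3]
    calc Real.exp ((1/(2*β)) * GammaInt R K₁ K₂ u) * (t * Real.exp (-(K₂/(4*β)) * t^2))
        = t * Real.exp ((1/(2*β)) * GammaInt R K₁ K₂ u + (-(K₂/(4*β)) * t^2)) := by
          rw [Real.exp_add]; ring
      _ ≤ t * Real.exp ((1/(2*β)) * GammaInt R K₁ K₂ (Real.sqrt (t^2+u^2))) :=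
          mul_le_mul_of_nonneg_left (Real.exp_le_exp.mpr h2) ht.le
  calc Real.exp ((1/(2*β)) * GammaInt R K₁ K₂ u) * (2*β/K₂)
      = Real.exp ((1/(2*β)) * GammaInt R K₁ K₂ u)
        * ∫ t in Ioi (0:ℝ), t * Real.exp (-(K₂/(4*β)) * t^2) := by rw [hgauss, hval]
    _ ≤ _ := hmono


lemma I_split (hβ : 0 < β) (hR : 0 < R) (hK₁ : 0 ≤ K₁) (hK₂ : 0 < K₂) {u : ℝ} (hu : 0 ≤ u) :
    (∫ s in Ioi u, s * Real.exp ((1/(2*β)) * GammaInt R K₁ K₂ s))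
      = (∫ s in Ioi (0:ℝ), s * Real.exp ((1/(2*β)) * GammaInt R K₁ K₂ s))
        - ∫ s in (0:ℝ)..u, s * Real.exp ((1/(2*β)) * GammaInt R K₁ K₂ s) := by
  have hun : Ioc 0 u ∪ Ioi u = Ioi (0:ℝ) := Ioc_union_Ioi_eq_Ioi hu
  have hsum := setIntegral_union (Ioc_disjoint_Ioi le_rfl) measurableSet_Ioi
    ((h_int hβ hR hK₁ hK₂).mono_set (Ioc_subset_Ioi_self.trans (Ioi_subset_Ioi le_rfl)))
    ((h_int hβ hR hK₁ hK₂).mono_set (Ioi_subset_Ioi hu))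
    (f := fun s : ℝ => s * Real.exp ((1/(2*β)) * GammaInt R K₁ K₂ s)) (μ := volume)
  rw [hun] at hsum
  rw [intervalIntegral.integral_of_le hu]
  linarith

theorem couplingF_linear_bounds' (β R K₁ K₂ : ℝ)
    (hβ : 0 < β) (hR : 0 < R) (hK₁ : 0 ≤ K₁) (hK₂ : 0 < K₂) :
    (∀ r ≥ (0:ℝ),
      (2 * β / K₂) * r ≤ (∫ u in (0:ℝ)..r,
        Real.exp (-(1 / (2 * β)) * GammaInt R K₁ K₂ u) *
          ∫ s in Set.Ioi u, s * Real.exp ((1 / (2 * β)) * GammaInt R K₁ K₂ s)) ∧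
      (∫ u in (0:ℝ)..r,
        Real.exp (-(1 / (2 * β)) * GammaInt R K₁ K₂ u) *
          ∫ s in Set.Ioi u, s * Real.exp ((1 / (2 * β)) * GammaInt R K₁ K₂ s))
        ≤ (∫ s in Set.Ioi (0:ℝ), s * Real.exp ((1/(2*β)) * GammaInt R K₁ K₂ s)) * r) ∧
    1 ≤ K₂ * (∫ s in Set.Ioi (0:ℝ), s * Real.exp ((1/(2*β)) * GammaInt R K₁ K₂ s)) / (2 * β) := by
  set δ := ∫ s in Set.Ioi (0:ℝ), s * Real.exp ((1/(2*β)) * GammaInt R K₁ K₂ s) with hδ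
  -- pointwise bounds on the integrand
  have hw : ∀ u : ℝ, 0 ≤ u →
      2*β/K₂ ≤ Real.exp (-(1 / (2 * β)) * GammaInt R K₁ K₂ u) *
          (∫ s in Set.Ioi u, s * Real.exp ((1 / (2 * β)) * GammaInt R K₁ K₂ s)) ∧
      Real.exp (-(1 / (2 * β)) * GammaInt R K₁ K₂ u) *
          (∫ s in Set.Ioi u, s * Real.exp ((1 / (2 * β)) * GammaInt R K₁ K₂ s)) ≤ δ := by
    intro u hu
    have hepos : 0 < Real.exp (-(1 / (2 * β)) * GammaInt R K₁ K₂ u) := Real.exp_pos _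
    have hcancel : Real.exp (-(1 / (2 * β)) * GammaInt R K₁ K₂ u)
        * Real.exp ((1 / (2 * β)) * GammaInt R K₁ K₂ u) = 1 := by
      rw [← Real.exp_add]; ring_nf; exact Real.exp_zero
    constructor
    · have := mul_le_mul_of_nonneg_left (I_lower hβ hR hK₁ hK₂ hu) hepos.le
      calc 2*β/K₂ = Real.exp (-(1 / (2 * β)) * GammaInt R K₁ K₂ u)
            * (Real.exp ((1 / (2 * β)) * GammaInt R K₁ K₂ u) * (2*β/K₂)) := by
            rw [← mul_assoc, hcancel, one_mul]
        _ ≤ _ := this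
    · have := mul_le_mul_of_nonneg_left (I_upper hβ hR hK₁ hK₂ hu) hepos.le
      calc Real.exp (-(1 / (2 * β)) * GammaInt R K₁ K₂ u)
            * (∫ s in Set.Ioi u, s * Real.exp ((1 / (2 * β)) * GammaInt R K₁ K₂ s))
          ≤ Real.exp (-(1 / (2 * β)) * GammaInt R K₁ K₂ u)
            * (Real.exp ((1 / (2 * β)) * GammaInt R K₁ K₂ u) * δ) := this
        _ = δ := by rw [← mul_assoc, hcancel, one_mul]
  -- continuous version of the integrand
  set w' : ℝ → ℝ := fun u => Real.exp (-(1 / (2 * β)) * GammaInt R K₁ K₂ u) *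
      (δ - ∫ s in (0:ℝ)..u, s * Real.exp ((1/(2*β)) * GammaInt R K₁ K₂ s)) with hw'
  have hw'cont : Continuous w' := by
    apply Continuous.mul
    · exact Real.continuous_exp.comp (continuous_const.mul (Gamma_cont hR))
    · exact continuous_const.sub (intervalIntegral.continuous_primitive
        (fun a b => (h_cont hR).intervalIntegrable a b) 0)
  have hw'eq : ∀ u : ℝ, 0 ≤ u → w' u
      = Real.exp (-(1 / (2 * β)) * GammaInt R K₁ K₂ u) *
          (∫ s in Set.Ioi u, s * Real.exp ((1 / (2 * β)) * GammaInt R K₁ K₂ s)) := by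
    intro u hu
    rw [hw', I_split hβ hR hK₁ hK₂ hu]
  refine ⟨fun r hr => ?_, ?_⟩
  · have hcongr : (∫ u in (0:ℝ)..r,
        Real.exp (-(1 / (2 * β)) * GammaInt R K₁ K₂ u) *
          ∫ s in Set.Ioi u, s * Real.exp ((1 / (2 * β)) * GammaInt R K₁ K₂ s))
        = ∫ u in (0:ℝ)..r, w' u := by
      apply intervalIntegral.integral_congr
      intro u hu
      rw [uIcc_of_le hr] at hu
      exact (hw'eq u hu.1).symm
    rw [hcongr]
    constructor
    · have h1 := intervalIntegral.integral_mono_on (μ := volume) hr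
        (intervalIntegrable_const (μ := volume) (c := 2*β/K₂))
        (hw'cont.intervalIntegrable 0 r)
        (fun u hu => by rw [hw'eq u hu.1]; exact (hw (u) hu.1).1)
      simp only [intervalIntegral.integral_const, sub_zero, smul_eq_mul] at h1
      calc (2*β/K₂)*r = r*(2*β/K₂) := by ring
        _ ≤ _ := h1
    · have h1 := intervalIntegral.integral_mono_on (μ := volume) hr
        (hw'cont.intervalIntegrable 0 r)
        (intervalIntegrable_const (μ := volume) (c := δ))
        (fun u hu => by rw [hw'eq u hu.1]; exact (hw (u) hu.1).2)
      simp only [intervalIntegral.integral_const, sub_zero, smul_eq_mul] at h1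
      calc (∫ u in (0:ℝ)..r, w' u) ≤ r * δ := h1
        _ = δ * r := by ring
  · have h0 := (hw 0 le_rfl).1
    rw [hw'eq 0 le_rfl |>.symm, hw'] at h0
    simp only [intervalIntegral.integral_same, sub_zero, intervalIntegral.integral_same] at h0
    rw [mul_zero, Real.exp_zero, one_mul] at h0
    rw [le_div_iff₀ (by positivity : (0:ℝ) < 2*β), one_mul]
    have := (div_le_iff₀ hK₂).mp h0
    linarith

end part2


/-- Two-sided linear bounds for `f`: `(2β/K₂) r ≤ f(r) ≤ δ r` for all `r ≥ 0`;
in particular the constant `c_E = K₂δ/(2β)` satisfies `c_E ≥ 1`. -/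
theorem couplingF_linear_bounds (β R K₁ K₂ : ℝ)
    (hβ : 0 < β) (hR : 0 < R) (hK₁ : 0 ≤ K₁) (hK₂ : 0 < K₂) :
    (∀ r ≥ (0:ℝ),
      (2 * β / K₂) * r ≤ couplingF β R K₁ K₂ r ∧
      couplingF β R K₁ K₂ r ≤ deltaConst β R K₁ K₂ * r) ∧
    1 ≤ K₂ * deltaConst β R K₁ K₂ / (2 * β) := by
  exact couplingF_linear_bounds' β R K₁ K₂ hβ hR hK₁ hK₂
end

section
/- Contraction differential inequality for the reflection-coupling Lyapunov function: With β > 0, the piecewise rate function γ (γ(r) = K₁r for r ≤ R, γ(r) = (−((K₁+K₂)/R)(r−R)+K₁)r for R ≤ r ≤ 2R, γ(r) = −K₂ r for r > 2R, where R > 0, K₁ ≥ 0, K₂ > 0), δ := ∫₀^∞ s e^{(1/(2β))∫₀ˢ γ(v)dv} ds, and f(r) = ∫₀ʳ e^{−(1/(2β))∫₀ᵘ γ(v)dv} ( ∫_u^∞ s e^{(1/(2β))∫₀ˢ γ(v)dv} ds ) du, the following holds: for any constant κ ≥ 0 and every r ≥ 0, f′(r) γ(r) + κ f′(r) r + 2β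 f″(r) ≤ −λ₀ f(r), where λ₀ := 2β/δ − (K₂ δ/(2β)) κ. -/
open MeasureTheory Real Set Filter

namespace RC

/- ### Gaussian helpers -/

lemma gaussF_hasDeriv {a : ℝ} (ha : 0 < a) (s : ℝ) :
    HasDerivAt (fun s : ℝ => -(1 / (2 * a)) * Real.exp (-(a * s ^ 2)))
      (s * Real.exp (-(a * s ^ 2))) s := by
  have h1 : HasDerivAt (fun s : ℝ => -(a * s ^ 2)) (-(a * (2 * s))) s := by
    have := (hasDerivAt_pow 2 s).const_mul a
    have h := this.neg
    simp at h
    exact h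
  have h2 := (h1.exp).const_mul (-(1 / (2 * a)))
  refine h2.congr_deriv ?_
  field_simp

lemma exp_neg_sq_tendsto {a : ℝ} (ha : 0 < a) :
    Tendsto (fun s : ℝ => Real.exp (-(a * s ^ 2))) atTop (nhds 0) := by
  apply Real.tendsto_exp_atBot.comp
  have h1 : Tendsto (fun s : ℝ => a * s ^ 2) atTop atTop :=
    (tendsto_pow_atTop (by norm_num : 2 ≠ 0)).const_mul_atTop ha
  simpa using tendsto_neg_atBot_iff.mpr h1

lemma gaussF_tendsto {a : ℝ} (ha : 0 < a) :
    Tendsto (fun s : ℝ => -(1 / (2 * a)) * Real.exp (-(a * s ^ 2))) atTop (nhds 0) := by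
  have := (exp_neg_sq_tendsto ha).const_mul (-(1 / (2 * a)))
  simpa using this

lemma gauss_integrableOn {a b : ℝ} (ha : 0 < a) (hb : 0 ≤ b) :
    IntegrableOn (fun s : ℝ => s * Real.exp (-(a * s ^ 2))) (Ioi b) :=
  integrableOn_Ioi_deriv_of_nonneg' (fun x _ => gaussF_hasDeriv ha x)
    (fun x hx => mul_nonneg (hb.trans hx.le) (Real.exp_pos _).le) (gaussF_tendsto ha)

lemma gauss_integral {a b : ℝ} (ha : 0 < a) (hb : 0 ≤ b) :
    ∫ s in Ioi b, s * Real.exp (-(a * s ^ 2))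
      = (1 / (2 * a)) * Real.exp (-(a * b ^ 2)) := by
  rw [integral_Ioi_of_hasDerivAt_of_tendsto' (fun x _ => gaussF_hasDeriv ha x)
    (gauss_integrableOn ha hb) (gaussF_tendsto ha)]
  ring

variable {β R K₁ K₂ : ℝ}

/- ### Elementary properties of `rateGamma` -/

lemma gamma_cont (hR : 0 < R) : Continuous (rateGamma R K₁ K₂) := by
  unfold rateGamma
  apply Continuous.if_le
  · exact continuous_const.mul continuous_id
  · apply Continuous.if_le
    · exact ((continuous_const.mul (continuous_id.sub continuous_const)).add
        continuous_const).mul continuous_id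
    · exact continuous_const.mul continuous_id
    · exact continuous_id
    · exact continuous_const
    · intro x hx
      subst hx
      field_simp
      ring
  · exact continuous_id
  · exact continuous_const
  · intro x hx
    subst hx
    have h2 : x ≤ 2 * x := by linarith
    simp [h2]

lemma gamma_lb (hR : 0 < R) (hK₁ : 0 ≤ K₁) (hK₂ : 0 < K₂) {v : ℝ} (hv : 0 ≤ v) :
    -K₂ * v ≤ rateGamma R K₁ K₂ v := by
  unfold rateGamma
  split_ifs with h1 h2
  · nlinarith
  · have key : ((K₁ + K₂) / R) * (v - R) ≤ K₁ + K₂ := by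
      rw [div_mul_eq_mul_div, div_le_iff₀ hR]
      nlinarith
    nlinarith
  · linarith

lemma gamma_key (hR : 0 < R) (hK₁ : 0 ≤ K₁) (hK₂ : 0 < K₂) {u s : ℝ}
    (hu : 0 ≤ u) (hus : u ≤ s) :
    u * rateGamma R K₁ K₂ s ≤ s * rateGamma R K₁ K₂ u := by
  have hs : 0 ≤ s := hu.trans hus
  have hRK : 0 ≤ (K₁ + K₂) / R := by positivity
  unfold rateGamma
  split_ifs with h1 h2 h3 h4 h5 h6 h7 h8
  · linarith
  · linarith
  · linarith
  · nlinarith [mul_nonneg (mul_nonneg (mul_nonneg hu hs) hRK)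
      (by linarith : (0:ℝ) ≤ s - R)]
  · nlinarith [mul_nonneg (mul_nonneg (mul_nonneg hu hs) hRK)
      (by linarith : (0:ℝ) ≤ s - u)]
  · linarith
  · nlinarith [mul_nonneg (mul_nonneg hu hs) (by linarith : (0:ℝ) ≤ K₁ + K₂)]
  · have key2 : 0 ≤ (K₁ + K₂) - (K₁ + K₂) / R * (u - R) := by
      rw [div_mul_eq_mul_div, sub_nonneg, div_le_iff₀ hR]
      nlinarith
    nlinarith [mul_nonneg (mul_nonneg hs hu) key2]
  · linarith

lemma gamma_ge2R (hR : 0 < R) {s : ℝ} (hs : 2 * R ≤ s) :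
    rateGamma R K₁ K₂ s = -K₂ * s := by
  unfold rateGamma
  split_ifs with h1 h2
  · linarith
  · have : s = 2 * R := le_antisymm h2 hs
    subst this
    field_simp
    ring
  · rfl

/- ### The primitive `Ifun` and the integrand `hfun` -/

noncomputable def Ifun (R K₁ K₂ u : ℝ) : ℝ := ∫ v in (0:ℝ)..u, rateGamma R K₁ K₂ v

noncomputable def hfun (β R K₁ K₂ s : ℝ) : ℝ :=
  s * Real.exp ((1 / (2 * β)) * Ifun R K₁ K₂ s)

noncomputable def Phi (β R K₁ K₂ u : ℝ) : ℝ := ∫ s in Ioi u, hfun β R K₁ K₂ s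

noncomputable def gfun (β R K₁ K₂ u : ℝ) : ℝ :=
  Real.exp (-(1 / (2 * β)) * Ifun R K₁ K₂ u) * Phi β R K₁ K₂ u

lemma deltaConst_eq : deltaConst β R K₁ K₂ = Phi β R K₁ K₂ 0 := rfl

lemma couplingF_eq : couplingF β R K₁ K₂ = fun r => ∫ u in (0:ℝ)..r, gfun β R K₁ K₂ u := rfl

lemma hI_deriv (hR : 0 < R) (u : ℝ) :
    HasDerivAt (Ifun R K₁ K₂) (rateGamma R K₁ K₂ u) u :=
  ((gamma_cont hR).integral_hasStrictDerivAt 0 u).hasDerivAt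

lemma hI_cont (hR : 0 < R) : Continuous (Ifun R K₁ K₂) :=
  continuous_iff_continuousAt.mpr fun u => (hI_deriv hR u).continuousAt

lemma hfun_cont (hR : 0 < R) : Continuous (hfun β R K₁ K₂) :=
  continuous_id.mul ((continuous_const.mul (hI_cont hR)).rexp)

lemma I_ge2R (hR : 0 < R) {s : ℝ} (hs : 2 * R ≤ s) :
    Ifun R K₁ K₂ s = Ifun R K₁ K₂ (2 * R) - K₂ / 2 * (s ^ 2 - (2 * R) ^ 2) := by
  have hint : ∀ a b : ℝ, IntervalIntegrable (rateGamma R K₁ K₂) volume a b :=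
    fun a b => (gamma_cont hR).intervalIntegrable a b
  have hadd := intervalIntegral.integral_add_adjacent_intervals (hint 0 (2 * R)) (hint (2 * R) s)
  have hcongr : ∫ v in (2 * R)..s, rateGamma R K₁ K₂ v = ∫ v in (2 * R)..s, -K₂ * v := by
    apply intervalIntegral.integral_congr
    intro x hx
    rw [uIcc_of_le hs] at hx
    exact gamma_ge2R hR hx.1
  have hval : ∫ v in (2 * R)..s, -K₂ * v = -(K₂ / 2 * (s ^ 2 - (2 * R) ^ 2)) := by
    rw [intervalIntegral.integral_const_mul, integral_id]; ring
  unfold Ifun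
  rw [← hadd, hcongr, hval]
  ring

lemma hfun_eq2R (hβ : 0 < β) (hR : 0 < R) {s : ℝ} (hs : 2 * R ≤ s) :
    hfun β R K₁ K₂ s
      = Real.exp ((1 / (2 * β)) * Ifun R K₁ K₂ (2 * R) + K₂ / (4 * β) * (2 * R) ^ 2)
        * (s * Real.exp (-(K₂ / (4 * β) * s ^ 2))) := by
  unfold hfun
  rw [I_ge2R hR hs]
  rw [show (1 / (2 * β)) * (Ifun R K₁ K₂ (2 * R) - K₂ / 2 * (s ^ 2 - (2 * R) ^ 2))
      = ((1 / (2 * β)) * Ifun R K₁ K₂ (2 * R) + K₂ / (4 * β) * (2 * R) ^ 2)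
        + (-(K₂ / (4 * β) * s ^ 2)) by field_simp; ring]
  rw [Real.exp_add]
  ring

lemma hfun_integrableOn (hβ : 0 < β) (hR : 0 < R) (hK₂ : 0 < K₂) (u : ℝ) :
    IntegrableOn (hfun β R K₁ K₂) (Ioi u) := by
  have ha : 0 < K₂ / (4 * β) := by positivity
  have h2R : IntegrableOn (hfun β R K₁ K₂) (Ioi (2 * R)) := by
    have hg := (gauss_integrableOn ha (by positivity : (0:ℝ) ≤ 2 * R)).const_mul
      (Real.exp ((1 / (2 * β)) * Ifun R K₁ K₂ (2 * R) + K₂ / (4 * β) * (2 * R) ^ 2))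
    exact MeasureTheory.IntegrableOn.congr_fun hg (fun s hs => (hfun_eq2R hβ hR (le_of_lt hs)).symm) measurableSet_Ioi
  rcases le_or_gt (2 * R) u with h | h
  · exact h2R.mono_set (Ioi_subset_Ioi h)
  · have hIoc : IntegrableOn (hfun β R K₁ K₂) (Ioc u (2 * R)) :=
      (hfun_cont hR).integrableOn_Ioc
    rw [← Ioc_union_Ioi_eq_Ioi h.le]
    exact hIoc.union h2R

lemma expI_tendsto (hβ : 0 < β) (hR : 0 < R) (hK₂ : 0 < K₂) :
    Tendsto (fun s => Real.exp ((1 / (2 * β)) * Ifun R K₁ K₂ s)) atTop (nhds 0) := by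
  have ha : 0 < K₂ / (4 * β) := by positivity
  have h0 : Tendsto (fun s : ℝ =>
      Real.exp ((1 / (2 * β)) * Ifun R K₁ K₂ (2 * R) + K₂ / (4 * β) * (2 * R) ^ 2)
        * Real.exp (-(K₂ / (4 * β) * s ^ 2))) atTop (nhds 0) := by
    simpa using (exp_neg_sq_tendsto ha).const_mul
      (Real.exp ((1 / (2 * β)) * Ifun R K₁ K₂ (2 * R) + K₂ / (4 * β) * (2 * R) ^ 2))
  apply h0.congr'
  filter_upwards [eventually_ge_atTop (2 * R)] with s hs
  rw [← Real.exp_add, I_ge2R hR hs]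
  congr 1
  field_simp
  ring

lemma Phi_eq (hβ : 0 < β) (hR : 0 < R) (hK₂ : 0 < K₂) (u : ℝ) :
    Phi β R K₁ K₂ u = Phi β R K₁ K₂ 0 - ∫ s in (0:ℝ)..u, hfun β R K₁ K₂ s := by
  rcases le_total 0 u with h | h
  · rw [intervalIntegral.integral_of_le h]
    have hsplit : Phi β R K₁ K₂ 0
        = (∫ s in Ioc 0 u, hfun β R K₁ K₂ s) + Phi β R K₁ K₂ u := by
      unfold Phi
      rw [← Ioc_union_Ioi_eq_Ioi h, setIntegral_union Ioc_disjoint_Ioi_same measurableSet_Ioi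
        ((hfun_cont hR).integrableOn_Ioc) (hfun_integrableOn hβ hR hK₂ u)]
    linarith
  · rw [intervalIntegral.integral_symm, intervalIntegral.integral_of_le h]
    have hsplit : Phi β R K₁ K₂ u
        = (∫ s in Ioc u 0, hfun β R K₁ K₂ s) + Phi β R K₁ K₂ 0 := by
      unfold Phi
      rw [← Ioc_union_Ioi_eq_Ioi h, setIntegral_union Ioc_disjoint_Ioi_same measurableSet_Ioi
        ((hfun_cont hR).integrableOn_Ioc) (hfun_integrableOn hβ hR hK₂ 0)]
    linarith

lemma Phi_hasDeriv (hβ : 0 < β) (hR : 0 < R) (hK₂ : 0 < K₂) (u : ℝ) :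
    HasDerivAt (Phi β R K₁ K₂) (-(hfun β R K₁ K₂ u)) u := by
  have h1 : HasDerivAt (fun u => Phi β R K₁ K₂ 0 - ∫ s in (0:ℝ)..u, hfun β R K₁ K₂ s)
      (-(hfun β R K₁ K₂ u)) u := by
    simpa using (((hfun_cont hR).integral_hasStrictDerivAt 0 u).hasDerivAt).const_sub
      (Phi β R K₁ K₂ 0)
  exact h1.congr_of_eventuallyEq (Eventually.of_forall fun x => Phi_eq hβ hR hK₂ x)

lemma Phi_cont (hβ : 0 < β) (hR : 0 < R) (hK₂ : 0 < K₂) : Continuous (Phi β R K₁ K₂) :=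
  continuous_iff_continuousAt.mpr fun u => (Phi_hasDeriv hβ hR hK₂ u).continuousAt

lemma gfun_hasDeriv (hβ : 0 < β) (hR : 0 < R) (hK₂ : 0 < K₂) (u : ℝ) :
    HasDerivAt (gfun β R K₁ K₂)
      (-((1 / (2 * β)) * rateGamma R K₁ K₂ u) * gfun β R K₁ K₂ u - u) u := by
  have hE : HasDerivAt (fun u => Real.exp (-(1 / (2 * β)) * Ifun R K₁ K₂ u))
      (Real.exp (-(1 / (2 * β)) * Ifun R K₁ K₂ u)
        * (-(1 / (2 * β)) * rateGamma R K₁ K₂ u)) u :=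
    ((hI_deriv hR u).const_mul (-(1 / (2 * β)))).exp
  have hmul := hE.mul (Phi_hasDeriv (K₁ := K₁) hβ hR hK₂ u)
  have hexp : Real.exp (-(1 / (2 * β)) * Ifun R K₁ K₂ u)
      * Real.exp ((1 / (2 * β)) * Ifun R K₁ K₂ u) = 1 := by
    rw [← Real.exp_add]
    simp
  have heq : Real.exp (-(1 / (2 * β)) * Ifun R K₁ K₂ u)
        * (-(1 / (2 * β)) * rateGamma R K₁ K₂ u) * Phi β R K₁ K₂ u
      + Real.exp (-(1 / (2 * β)) * Ifun R K₁ K₂ u) * -(hfun β R K₁ K₂ u)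
      = -((1 / (2 * β)) * rateGamma R K₁ K₂ u) * gfun β R K₁ K₂ u - u := by
    unfold gfun hfun
    linear_combination (-u) * hexp
  exact heq ▸ hmul

lemma gfun_cont (hβ : 0 < β) (hR : 0 < R) (hK₂ : 0 < K₂) : Continuous (gfun β R K₁ K₂) :=
  continuous_iff_continuousAt.mpr fun u => (gfun_hasDeriv hβ hR hK₂ u).differentiableAt.continuousAt

lemma f_hasDeriv (hβ : 0 < β) (hR : 0 < R) (hK₂ : 0 < K₂) (r : ℝ) :
    HasDerivAt (couplingF β R K₁ K₂) (gfun β R K₁ K₂ r) r := by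
  rw [couplingF_eq]
  exact ((gfun_cont hβ hR hK₂).integral_hasStrictDerivAt 0 r).hasDerivAt

-- appended before `end RC`
lemma Phi_nonneg {u : ℝ} (hu : 0 ≤ u) : 0 ≤ Phi β R K₁ K₂ u :=
  setIntegral_nonneg measurableSet_Ioi fun s hs =>
    mul_nonneg (hu.trans hs.out.le) (Real.exp_pos _).le

lemma I_sub (hR : 0 < R) (u s : ℝ) :
    Ifun R K₁ K₂ s - Ifun R K₁ K₂ u = ∫ v in u..s, rateGamma R K₁ K₂ v := by
  have hadd := intervalIntegral.integral_add_adjacent_intervals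
    ((gamma_cont (K₁ := K₁) (K₂ := K₂) hR).intervalIntegrable (μ := volume) 0 u)
    ((gamma_cont (K₁ := K₁) (K₂ := K₂) hR).intervalIntegrable (μ := volume) u s)
  unfold Ifun
  linarith

lemma I_sub_lb (hR : 0 < R) (hK₁ : 0 ≤ K₁) (hK₂ : 0 < K₂) {u s : ℝ}
    (hu : 0 ≤ u) (hus : u ≤ s) :
    -(K₂ / 2) * (s ^ 2 - u ^ 2) ≤ Ifun R K₁ K₂ s - Ifun R K₁ K₂ u := by
  rw [I_sub hR]
  have hval : ∫ v in u..s, -K₂ * v = -(K₂ / 2) * (s ^ 2 - u ^ 2) := by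
    rw [intervalIntegral.integral_const_mul, integral_id]; ring
  rw [← hval]
  apply intervalIntegral.integral_mono_on hus
    ((continuous_const.mul continuous_id).intervalIntegrable (μ := volume) u s)
    ((gamma_cont hR).intervalIntegrable u s)
  intro x hx
  exact gamma_lb hR hK₁ hK₂ (hu.trans hx.1)

lemma g_lb (hβ : 0 < β) (hR : 0 < R) (hK₁ : 0 ≤ K₁) (hK₂ : 0 < K₂) {u : ℝ} (hu : 0 ≤ u) :
    2 * β / K₂ ≤ gfun β R K₁ K₂ u := by
  have ha : 0 < K₂ / (4 * β) := by positivity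
  have hpt : ∀ s ∈ Ioi u,
      Real.exp ((1 / (2 * β)) * Ifun R K₁ K₂ u + K₂ / (4 * β) * u ^ 2)
        * (s * Real.exp (-(K₂ / (4 * β) * s ^ 2))) ≤ hfun β R K₁ K₂ s := by
    intro s hs
    have hs' : u ≤ s := hs.out.le
    have hs0 : 0 ≤ s := hu.trans hs'
    have h1 := I_sub_lb hR hK₁ hK₂ hu hs'
    have h2 := mul_le_mul_of_nonneg_left h1 (by positivity : (0:ℝ) ≤ 1 / (2 * β))
    have h3 : (1 / (2 * β)) * (-(K₂ / 2) * (s ^ 2 - u ^ 2))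
        = K₂ / (4 * β) * u ^ 2 + (-(K₂ / (4 * β) * s ^ 2)) := by
      field_simp; ring
    have hexp_le : (1 / (2 * β)) * Ifun R K₁ K₂ u + K₂ / (4 * β) * u ^ 2
        + (-(K₂ / (4 * β) * s ^ 2)) ≤ (1 / (2 * β)) * Ifun R K₁ K₂ s := by
      nlinarith [h2, h3]
    calc Real.exp ((1 / (2 * β)) * Ifun R K₁ K₂ u + K₂ / (4 * β) * u ^ 2)
          * (s * Real.exp (-(K₂ / (4 * β) * s ^ 2)))
        = s * Real.exp ((1 / (2 * β)) * Ifun R K₁ K₂ u + K₂ / (4 * β) * u ^ 2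
            + (-(K₂ / (4 * β) * s ^ 2))) := by simp only [Real.exp_add]; ring
      _ ≤ s * Real.exp ((1 / (2 * β)) * Ifun R K₁ K₂ s) :=
          mul_le_mul_of_nonneg_left (Real.exp_le_exp.mpr hexp_le) hs0
  have hmin_int : IntegrableOn
      (fun s => Real.exp ((1 / (2 * β)) * Ifun R K₁ K₂ u + K₂ / (4 * β) * u ^ 2)
        * (s * Real.exp (-(K₂ / (4 * β) * s ^ 2)))) (Ioi u) :=
    (gauss_integrableOn ha hu).const_mul _
  have hPhi_ge : Real.exp ((1 / (2 * β)) * Ifun R K₁ K₂ u + K₂ / (4 * β) * u ^ 2)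
      * ((1 / (2 * (K₂ / (4 * β)))) * Real.exp (-(K₂ / (4 * β) * u ^ 2)))
      ≤ Phi β R K₁ K₂ u := by
    rw [← gauss_integral ha hu, ← integral_const_mul]
    exact setIntegral_mono_on hmin_int (hfun_integrableOn hβ hR hK₂ u) measurableSet_Ioi hpt
  have hcomb : Real.exp ((1 / (2 * β)) * Ifun R K₁ K₂ u + K₂ / (4 * β) * u ^ 2)
      * ((1 / (2 * (K₂ / (4 * β)))) * Real.exp (-(K₂ / (4 * β) * u ^ 2)))
      = 2 * β / K₂ * Real.exp ((1 / (2 * β)) * Ifun R K₁ K₂ u) := by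
    rw [mul_comm, mul_assoc, ← Real.exp_add,
      show -(K₂ / (4 * β) * u ^ 2) + ((1 / (2 * β)) * Ifun R K₁ K₂ u + K₂ / (4 * β) * u ^ 2)
        = (1 / (2 * β)) * Ifun R K₁ K₂ u by ring]
    congr 1
    field_simp
    ring
  rw [hcomb] at hPhi_ge
  have hmul := mul_le_mul_of_nonneg_left hPhi_ge
    (Real.exp_pos (-(1 / (2 * β)) * Ifun R K₁ K₂ u)).le
  have hexp1 : Real.exp (-(1 / (2 * β)) * Ifun R K₁ K₂ u)
      * Real.exp ((1 / (2 * β)) * Ifun R K₁ K₂ u) = 1 := by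
    rw [← Real.exp_add]; simp
  have heq : Real.exp (-(1 / (2 * β)) * Ifun R K₁ K₂ u)
      * (2 * β / K₂ * Real.exp ((1 / (2 * β)) * Ifun R K₁ K₂ u)) = 2 * β / K₂ := by
    linear_combination (2 * β / K₂) * hexp1
  rw [heq] at hmul
  exact hmul

lemma gfun_zero : gfun β R K₁ K₂ 0 = Phi β R K₁ K₂ 0 := by
  unfold gfun Ifun
  simp

lemma deriv_g_nonpos (hβ : 0 < β) (hR : 0 < R) (hK₁ : 0 ≤ K₁) (hK₂ : 0 < K₂)
    {x : ℝ} (hx : 0 < x) : deriv (gfun β R K₁ K₂) x ≤ 0 := by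
  rw [(gfun_hasDeriv hβ hR hK₂ x).deriv]
  rcases le_or_gt 0 (rateGamma R K₁ K₂ x) with hγ | hγ
  · have hg0 : 0 ≤ gfun β R K₁ K₂ x :=
      mul_nonneg (Real.exp_pos _).le (Phi_nonneg hx.le)
    nlinarith [mul_nonneg (mul_nonneg (by positivity : (0:ℝ) ≤ 1 / (2 * β)) hγ) hg0]
  · have hγs : ∀ s ∈ Ioi x, rateGamma R K₁ K₂ s < 0 := by
      intro s hs
      have hk := gamma_key hR hK₁ hK₂ hx.le hs.out.le
      nlinarith [hs.out, mul_neg_of_pos_of_neg (lt_trans hx hs.out) hγ]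
    have hF₂d : ∀ s : ℝ,
        HasDerivAt (fun s => -(2 * β) * Real.exp ((1 / (2 * β)) * Ifun R K₁ K₂ s))
          (-(rateGamma R K₁ K₂ s) * Real.exp ((1 / (2 * β)) * Ifun R K₁ K₂ s)) s := by
      intro s
      have := (((hI_deriv (K₁ := K₁) (K₂ := K₂) hR s).const_mul ((1:ℝ) / (2 * β))).exp).const_mul (-(2 * β))
      refine this.congr_deriv ?_
      field_simp
    have hF₂t : Tendsto (fun s => -(2 * β) * Real.exp ((1 / (2 * β)) * Ifun R K₁ K₂ s))
        atTop (nhds 0) := by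
      simpa using (expI_tendsto (K₁ := K₁) hβ hR hK₂).const_mul (-(2 * β))
    have hint2 : IntegrableOn
        (fun s => -(rateGamma R K₁ K₂ s) * Real.exp ((1 / (2 * β)) * Ifun R K₁ K₂ s)) (Ioi x) :=
      integrableOn_Ioi_deriv_of_nonneg' (fun s _ => hF₂d s)
        (fun s hs => mul_nonneg (by linarith [hγs s hs]) (Real.exp_pos _).le) hF₂t
    have hval2 : ∫ s in Ioi x,
        -(rateGamma R K₁ K₂ s) * Real.exp ((1 / (2 * β)) * Ifun R K₁ K₂ s)
        = 2 * β * Real.exp ((1 / (2 * β)) * Ifun R K₁ K₂ x) := by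
      rw [integral_Ioi_of_hasDerivAt_of_tendsto' (fun s _ => hF₂d s) hint2 hF₂t]
      ring
    have hPhi_le : Phi β R K₁ K₂ x
        ≤ x / (-(rateGamma R K₁ K₂ x))
          * (2 * β * Real.exp ((1 / (2 * β)) * Ifun R K₁ K₂ x)) := by
      rw [← hval2, ← integral_const_mul]
      apply setIntegral_mono_on (hfun_integrableOn hβ hR hK₂ x) (hint2.const_mul _)
        measurableSet_Ioi
      intro s hs
      have hk := gamma_key hR hK₁ hK₂ hx.le hs.out.le
      have hE := Real.exp_pos ((1 / (2 * β)) * Ifun R K₁ K₂ s)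
      have hposγ : 0 < -rateGamma R K₁ K₂ x := by linarith
      show hfun β R K₁ K₂ s ≤ _
      unfold hfun
      rw [div_mul_eq_mul_div x (-rateGamma R K₁ K₂ x), le_div_iff₀ hposγ]
      nlinarith [mul_le_mul_of_nonneg_right hk hE.le]
    have hexp1 : Real.exp (-(1 / (2 * β)) * Ifun R K₁ K₂ x)
        * Real.exp ((1 / (2 * β)) * Ifun R K₁ K₂ x) = 1 := by
      rw [← Real.exp_add]; simp
    have hmul := mul_le_mul_of_nonneg_left hPhi_le
      (Real.exp_pos (-(1 / (2 * β)) * Ifun R K₁ K₂ x)).le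
    have hgle : gfun β R K₁ K₂ x ≤ 2 * β * x / (-(rateGamma R K₁ K₂ x)) := by
      have heq : Real.exp (-(1 / (2 * β)) * Ifun R K₁ K₂ x)
          * (x / (-(rateGamma R K₁ K₂ x))
            * (2 * β * Real.exp ((1 / (2 * β)) * Ifun R K₁ K₂ x)))
          = 2 * β * x / (-(rateGamma R K₁ K₂ x)) := by
        linear_combination (2 * β * x / (-(rateGamma R K₁ K₂ x))) * hexp1
      rw [heq] at hmul
      exact hmul
    have hfin : -(1 / (2 * β) * rateGamma R K₁ K₂ x)
        * (2 * β * x / (-(rateGamma R K₁ K₂ x))) = x := by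
      field_simp [ne_of_lt hγ]
    have hc : 0 < -(1 / (2 * β) * rateGamma R K₁ K₂ x) := by
      have : 0 < 1 / (2 * β) := by positivity
      nlinarith
    have := mul_le_mul_of_nonneg_left hgle hc.le
    rw [hfin] at this
    linarith

lemma g_antitone (hβ : 0 < β) (hR : 0 < R) (hK₁ : 0 ≤ K₁) (hK₂ : 0 < K₂) :
    AntitoneOn (gfun β R K₁ K₂) (Ici 0) := by
  apply antitoneOn_of_deriv_nonpos (convex_Ici 0) (gfun_cont hβ hR hK₂).continuousOn
  · intro x _
    exact ((gfun_hasDeriv hβ hR hK₂ x).differentiableAt).differentiableWithinAt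
  · intro x hx
    rw [interior_Ici] at hx
    exact deriv_g_nonpos hβ hR hK₁ hK₂ hx

lemma g_ub (hβ : 0 < β) (hR : 0 < R) (hK₁ : 0 ≤ K₁) (hK₂ : 0 < K₂) {u : ℝ} (hu : 0 ≤ u) :
    gfun β R K₁ K₂ u ≤ Phi β R K₁ K₂ 0 := by
  have h0 := g_antitone hβ hR hK₁ hK₂ self_mem_Ici (mem_Ici.mpr hu) hu
  rw [gfun_zero] at h0
  exact h0

end RC

/-- Contraction differential inequality for the reflection-coupling Lyapunov
function: for any `κ ≥ 0` and every `r ≥ 0`,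
`f′(r) γ(r) + κ f′(r) r + 2β f″(r) ≤ −λ₀ f(r)` with
`λ₀ = 2β/δ − (K₂δ/(2β)) κ`. -/
theorem couplingF_contraction (β R K₁ K₂ : ℝ)
    (hβ : 0 < β) (hR : 0 < R) (hK₁ : 0 ≤ K₁) (hK₂ : 0 < K₂) :
    ∀ κ ≥ (0:ℝ), ∀ r ≥ (0:ℝ),
      deriv (couplingF β R K₁ K₂) r * rateGamma R K₁ K₂ r +
          κ * deriv (couplingF β R K₁ K₂) r * r +
          2 * β * deriv (deriv (couplingF β R K₁ K₂)) r
        ≤ -(2 * β / deltaConst β R K₁ K₂ -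
              (K₂ * deltaConst β R K₁ K₂ / (2 * β)) * κ) *
            couplingF β R K₁ K₂ r := by
  intro κ hκ r hr
  have hδlb : 2 * β / K₂ ≤ deltaConst β R K₁ K₂ := by
    rw [RC.deltaConst_eq, ← RC.gfun_zero]
    exact RC.g_lb hβ hR hK₁ hK₂ le_rfl
  have hδpos : 0 < deltaConst β R K₁ K₂ := lt_of_lt_of_le (by positivity) hδlb
  have hd1 : deriv (couplingF β R K₁ K₂) = RC.gfun β R K₁ K₂ :=
    funext fun x => (RC.f_hasDeriv hβ hR hK₂ x).deriv
  rw [hd1, (RC.gfun_hasDeriv hβ hR hK₂ r).deriv]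
  have hgu : RC.gfun β R K₁ K₂ r ≤ deltaConst β R K₁ K₂ := by
    rw [RC.deltaConst_eq]
    exact RC.g_ub hβ hR hK₁ hK₂ hr
  have hfu : couplingF β R K₁ K₂ r ≤ deltaConst β R K₁ K₂ * r := by
    rw [RC.couplingF_eq]
    calc (∫ u in (0:ℝ)..r, RC.gfun β R K₁ K₂ u)
        ≤ ∫ _u in (0:ℝ)..r, deltaConst β R K₁ K₂ := by
          apply intervalIntegral.integral_mono_on hr
            ((RC.gfun_cont hβ hR hK₂).intervalIntegrable 0 r) intervalIntegrable_const
          intro x hx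
          rw [RC.deltaConst_eq]
          exact RC.g_ub hβ hR hK₁ hK₂ hx.1
      _ = deltaConst β R K₁ K₂ * r := by rw [intervalIntegral.integral_const, smul_eq_mul, sub_zero]; try ring
  have hfl : 2 * β / K₂ * r ≤ couplingF β R K₁ K₂ r := by
    rw [RC.couplingF_eq]
    calc 2 * β / K₂ * r = ∫ _u in (0:ℝ)..r, 2 * β / K₂ := by rw [intervalIntegral.integral_const, smul_eq_mul, sub_zero]; try ring
      _ ≤ ∫ u in (0:ℝ)..r, RC.gfun β R K₁ K₂ u := by
          apply intervalIntegral.integral_mono_on hr intervalIntegrable_const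
            ((RC.gfun_cont hβ hR hK₂).intervalIntegrable 0 r)
          intro x hx
          exact RC.g_lb hβ hR hK₁ hK₂ hx.1
  -- algebra
  have h1b : 2 * β * r ≤ K₂ * couplingF β R K₁ K₂ r := by
    have e : K₂ * (2 * β / K₂ * r) = 2 * β * r := by field_simp
    nlinarith [mul_le_mul_of_nonneg_left hfl hK₂.le]
  have h1a : RC.gfun β R K₁ K₂ r * r ≤ deltaConst β R K₁ K₂ * r :=
    mul_le_mul_of_nonneg_right hgu hr
  have h1c : deltaConst β R K₁ K₂ * r
      ≤ K₂ * deltaConst β R K₁ K₂ / (2 * β) * couplingF β R K₁ K₂ r := by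
    rw [div_mul_eq_mul_div, le_div_iff₀ (by positivity : (0:ℝ) < 2 * β)]
    nlinarith [mul_le_mul_of_nonneg_left h1b hδpos.le]
  have h1 : κ * RC.gfun β R K₁ K₂ r * r
      ≤ κ * (K₂ * deltaConst β R K₁ K₂ / (2 * β)) * couplingF β R K₁ K₂ r := by
    calc κ * RC.gfun β R K₁ K₂ r * r = κ * (RC.gfun β R K₁ K₂ r * r) := by ring
      _ ≤ κ * (K₂ * deltaConst β R K₁ K₂ / (2 * β) * couplingF β R K₁ K₂ r) :=
          mul_le_mul_of_nonneg_left (h1a.trans h1c) hκ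
      _ = κ * (K₂ * deltaConst β R K₁ K₂ / (2 * β)) * couplingF β R K₁ K₂ r := by ring
  have h2 : 2 * β / deltaConst β R K₁ K₂ * couplingF β R K₁ K₂ r ≤ 2 * β * r := by
    rw [div_mul_eq_mul_div, div_le_iff₀ hδpos]
    nlinarith [mul_le_mul_of_nonneg_left hfu (by positivity : (0:ℝ) ≤ 2 * β)]
  have hsimp : RC.gfun β R K₁ K₂ r * rateGamma R K₁ K₂ r
      + κ * RC.gfun β R K₁ K₂ r * r
      + 2 * β * (-(1 / (2 * β) * rateGamma R K₁ K₂ r) * RC.gfun β R K₁ K₂ r - r)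
      = κ * RC.gfun β R K₁ K₂ r * r - 2 * β * r := by
    field_simp
    ring
  have hrhs : -(2 * β / deltaConst β R K₁ K₂
        - K₂ * deltaConst β R K₁ K₂ / (2 * β) * κ) * couplingF β R K₁ K₂ r
      = -(2 * β / deltaConst β R K₁ K₂ * couplingF β R K₁ K₂ r)
        + κ * (K₂ * deltaConst β R K₁ K₂ / (2 * β)) * couplingF β R K₁ K₂ r := by
    ring
  linarith [hsimp, hrhs, h1, h2]
end

section
/- Lipschitz estimate for the empirical-vs-mean diffusion error: Let σ̃ : ℝ^d × ℝ^d → ℝ^{d×n} satisfy (1/2)‖σ̃(x₁,y₁) − σ̃(x₂,y₂)‖²_{HS} ≤ K_σ(|x₁−x₂|² + |y₁−y₂|²) for all x₁,x₂,y₁,y₂ ∈ ℝ^d and σ̃(x,y)σ̃(x,y)* ≤ K_σ I_{d×d} for all x, y (as symmetric matrices), where K_σ > 0. Let μ be a probability measure on ℝ^d, let N ≥ 1, and for x = (x¹,…,x^N) ∈ (ℝ^d)^N define Σⁱ(x) := ((1/N) Σ_{m=1}^N σ̃(xⁱ,x^m)) ((1/N) Σ_{m=1}^N σ̃(xⁱ,x^m))*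 − (∫_{ℝ^d} σ̃(xⁱ,y) μ(dy)) (∫_{ℝ^d} σ̃(xⁱ,y) μ(dy))* for 1 ≤ i ≤ N. Then for all x, x̃ ∈ (ℝ^d)^N, Σ_{i=1}^N ‖Σⁱ(x)‖_{HS} − Σ_{i=1}^N ‖Σⁱ(x̃)‖_{HS} ≤ 6√2 K_σ Σ_{i=1}^N |xⁱ − x̃ⁱ|. -/
open MeasureTheory Matrix

/-- Hilbert–Schmidt (Frobenius) norm of a real matrix. -/
noncomputable def hsNorm {m n : ℕ} (A : Matrix (Fin m) (Fin n) ℝ) : ℝ :=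
  Real.sqrt (∑ i, ∑ j, (A i j) ^ 2)

namespace Aux
variable {d n : ℕ}

def toE (A : Matrix (Fin d) (Fin n) ℝ) : EuclideanSpace ℝ (Fin d × Fin n) :=
  WithLp.toLp 2 (fun p : Fin d × Fin n => A p.1 p.2)

lemma toE_sub (A B : Matrix (Fin d) (Fin n) ℝ) : toE (A - B) = toE A - toE B := rfl

lemma hsNorm_eq (A : Matrix (Fin d) (Fin n) ℝ) : hsNorm A = ‖toE A‖ := by
  rw [EuclideanSpace.norm_eq, hsNorm]
  congr 1
  rw [Fintype.sum_prod_type]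
  simp [toE, sq_abs]

def mulVecE (P : Matrix (Fin d) (Fin n) ℝ) (w : EuclideanSpace ℝ (Fin n)) :
    EuclideanSpace ℝ (Fin d) := WithLp.toLp 2 (P.mulVec w)

lemma dot_eq_normsq (u : EuclideanSpace ℝ (Fin d)) : u ⬝ᵥ u = ‖u‖^2 := by
  rw [EuclideanSpace.norm_eq, Real.sq_sqrt (by positivity)]
  simp [dotProduct, sq_abs, sq]

lemma dot_le (u v : EuclideanSpace ℝ (Fin d)) : u ⬝ᵥ v ≤ ‖u‖ * ‖v‖ := by
  have := real_inner_le_norm u v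
  rw [show (inner ℝ u v : ℝ) = u ⬝ᵥ v by
    simp [dotProduct, EuclideanSpace.inner_eq_star_dotProduct, mul_comm]] at this
  exact this

lemma opBd_of_psd {K : ℝ} (hK : 0 ≤ K) (P : Matrix (Fin d) (Fin n) ℝ)
    (h : (K • (1 : Matrix (Fin d) (Fin d) ℝ) - P * Pᵀ).PosSemidef)
    (w : EuclideanSpace ℝ (Fin n)) : ‖mulVecE P w‖ ≤ Real.sqrt K * ‖w‖ := by
  set v : EuclideanSpace ℝ (Fin d) := mulVecE P w with hv
  have h1 := h.dotProduct_mulVec_nonneg (v : Fin d → ℝ)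
  rw [Matrix.sub_mulVec, dotProduct_sub, Matrix.smul_mulVec,
    Matrix.one_mulVec] at h1
  have hstar : (star v : Fin d → ℝ) = v := by simp
  rw [hstar] at h1
  have hPPt : v ⬝ᵥ (P * Pᵀ) *ᵥ v = (Pᵀ *ᵥ v) ⬝ᵥ (Pᵀ *ᵥ v) := by
    rw [← Matrix.mulVec_mulVec, Matrix.dotProduct_mulVec, ← Matrix.mulVec_transpose]
  set u : EuclideanSpace ℝ (Fin n) := WithLp.toLp 2 (Pᵀ *ᵥ v.ofLp) with hu
  rw [hPPt] at h1
  have hKsmul : v ⬝ᵥ K • v = K * ‖v‖^2 := by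
    rw [dotProduct_smul, smul_eq_mul, dot_eq_normsq]
  have huu : (Pᵀ *ᵥ v) ⬝ᵥ (Pᵀ *ᵥ v) = ‖u‖^2 := dot_eq_normsq u
  rw [hKsmul, huu] at h1
  have h2 : ‖u‖ ≤ Real.sqrt K * ‖v‖ := by
    have hsq : ‖u‖^2 ≤ (Real.sqrt K * ‖v‖)^2 := by
      rw [mul_pow, Real.sq_sqrt hK]; nlinarith [h1]
    have hn : (0:ℝ) ≤ Real.sqrt K * ‖v‖ := by positivity
    nlinarith [norm_nonneg u, hsq]
  have h3 : ‖v‖^2 ≤ Real.sqrt K * ‖v‖ * ‖w‖ := by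
    have e1 : ‖v‖^2 = u ⬝ᵥ w := by
      rw [← dot_eq_normsq, hu]
      show v ⬝ᵥ P *ᵥ w = _
      rw [Matrix.dotProduct_mulVec, ← Matrix.mulVec_transpose]
    rw [e1]
    calc u ⬝ᵥ w ≤ ‖u‖ * ‖w‖ := dot_le _ _
      _ ≤ Real.sqrt K * ‖v‖ * ‖w‖ := by
          have := norm_nonneg w
          nlinarith [h2]
  rcases eq_or_lt_of_le (norm_nonneg v) with hv0 | hv0
  · rw [← hv0]; positivity
  · nlinarith [h3]
end Aux

namespace Aux
variable {d n : ℕ}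

lemma normsq_eq {k : ℕ} (u : EuclideanSpace ℝ (Fin k)) : ‖u‖^2 = ∑ i, (u i)^2 := by
  rw [EuclideanSpace.norm_eq, Real.sq_sqrt (by positivity)]
  simp [sq_abs]

lemma abs_apply_le_norm {k : ℕ} (u : EuclideanSpace ℝ (Fin k)) (a : Fin k) : |u a| ≤ ‖u‖ := by
  rw [EuclideanSpace.norm_eq]
  have h1 : |u a| = Real.sqrt ((u a)^2) := by rw [Real.sqrt_sq_eq_abs]
  rw [h1]
  apply Real.sqrt_le_sqrt
  have : ((u a)^2) = ‖u a‖^2 := by simp [sq_abs]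
  rw [this]
  exact Finset.single_le_sum (f := fun i => ‖u i‖^2) (fun i _ => by positivity)
    (Finset.mem_univ a)

lemma hsNorm_nonneg (A : Matrix (Fin d) (Fin n) ℝ) : 0 ≤ hsNorm A := Real.sqrt_nonneg _

lemma hsNorm_transpose (A : Matrix (Fin d) (Fin n) ℝ) : hsNorm Aᵀ = hsNorm A := by
  rw [hsNorm, hsNorm, Finset.sum_comm]
  rfl

lemma sub_hsNorm (A B : Matrix (Fin d) (Fin n) ℝ) : hsNorm A - hsNorm B ≤ hsNorm (A - B) := by
  rw [hsNorm_eq, hsNorm_eq, hsNorm_eq, toE_sub]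
  exact norm_sub_norm_le _ _

lemma hsNorm_sub_le (A B : Matrix (Fin d) (Fin n) ℝ) : hsNorm (A - B) ≤ hsNorm A + hsNorm B := by
  rw [hsNorm_eq, hsNorm_eq, hsNorm_eq, toE_sub]
  exact norm_sub_le _ _

lemma toE_sum {ι : Type*} (s : Finset ι) (f : ι → Matrix (Fin d) (Fin n) ℝ) :
    toE (∑ i ∈ s, f i) = ∑ i ∈ s, toE (f i) := by
  classical
  induction s using Finset.induction with
  | empty => ext p; simp [toE]
  | insert _ _ h ih => rw [Finset.sum_insert h, Finset.sum_insert h, ← ih]; rfl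

lemma toE_smul (c : ℝ) (A : Matrix (Fin d) (Fin n) ℝ) : toE (c • A) = c • toE A := rfl

lemma hsNorm_smul (c : ℝ) (A : Matrix (Fin d) (Fin n) ℝ) : hsNorm (c • A) = |c| * hsNorm A := by
  rw [hsNorm_eq, hsNorm_eq, toE_smul, norm_smul, Real.norm_eq_abs]

lemma hsNorm_sum_le {ι : Type*} (s : Finset ι) (f : ι → Matrix (Fin d) (Fin n) ℝ) :
    hsNorm (∑ i ∈ s, f i) ≤ ∑ i ∈ s, hsNorm (f i) := by
  rw [hsNorm_eq, toE_sum]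
  refine (norm_sum_le _ _).trans ?_
  apply Finset.sum_le_sum
  intro i _
  rw [hsNorm_eq]

lemma mulVecE_apply (P : Matrix (Fin d) (Fin n) ℝ) (w : EuclideanSpace ℝ (Fin n)) (j : Fin d) :
    mulVecE P w j = ∑ k, P j k * w k := rfl

lemma hsNorm_mul_transpose_le {a b : ℕ} {K : ℝ} (hK : 0 ≤ K)
    (M : Matrix (Fin a) (Fin n) ℝ) (P : Matrix (Fin b) (Fin n) ℝ)
    (hP : ∀ w : EuclideanSpace ℝ (Fin n), ‖mulVecE P w‖ ≤ Real.sqrt K * ‖w‖) :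
    hsNorm (M * Pᵀ) ≤ Real.sqrt K * hsNorm M := by
  have key : ∀ i, ∑ j, ((M * Pᵀ) i j)^2 ≤ K * ∑ k, (M i k)^2 := by
    intro i
    set r : EuclideanSpace ℝ (Fin n) := WithLp.toLp 2 (M i) with hr
    have h := hP r
    have hn : (0:ℝ) ≤ ‖mulVecE P r‖ := norm_nonneg _
    have hpow : ‖mulVecE P r‖^2 ≤ (Real.sqrt K * ‖r‖)^2 := pow_le_pow_left₀ hn h 2
    rw [mul_pow, Real.sq_sqrt hK] at hpow
    have h2 : ∑ j, (mulVecE P r j)^2 ≤ K * ∑ k, (r k)^2 := by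
      calc ∑ j, (mulVecE P r j)^2 = ‖mulVecE P r‖^2 := (normsq_eq _).symm
        _ ≤ K * ‖r‖^2 := hpow
        _ = K * ∑ k, (r k)^2 := by rw [normsq_eq]
    have e : ∀ j, (M * Pᵀ) i j = mulVecE P r j := by
      intro j
      rw [mulVecE_apply, Matrix.mul_apply]
      simp [Matrix.transpose_apply, mul_comm, hr]
    calc ∑ j, ((M * Pᵀ) i j)^2 = ∑ j, (mulVecE P r j)^2 := by
          apply Finset.sum_congr rfl; intro j _; rw [e j]
      _ ≤ K * ∑ k, (M i k)^2 := h2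
  rw [hsNorm, hsNorm]
  have : ∑ i, ∑ j, ((M * Pᵀ) i j)^2 ≤ K * ∑ i, ∑ k, (M i k)^2 := by
    rw [Finset.mul_sum]
    exact Finset.sum_le_sum fun i _ => key i
  calc Real.sqrt (∑ i, ∑ j, ((M * Pᵀ) i j)^2) ≤ Real.sqrt (K * ∑ i, ∑ k, (M i k)^2) :=
        Real.sqrt_le_sqrt this
    _ = Real.sqrt K * Real.sqrt (∑ i, ∑ k, (M i k)^2) := Real.sqrt_mul hK _

lemma prod_diff_le {K : ℝ} (hK : 0 ≤ K) (A A' : Matrix (Fin d) (Fin n) ℝ)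
    (hA : ∀ w : EuclideanSpace ℝ (Fin n), ‖mulVecE A w‖ ≤ Real.sqrt K * ‖w‖)
    (hA' : ∀ w : EuclideanSpace ℝ (Fin n), ‖mulVecE A' w‖ ≤ Real.sqrt K * ‖w‖) :
    hsNorm (A * Aᵀ - A' * A'ᵀ) ≤ 2 * Real.sqrt K * hsNorm (A - A') := by
  have hdecomp : A * Aᵀ - A' * A'ᵀ = (A - A') * Aᵀ + A' * (A - A')ᵀ := by
    rw [Matrix.transpose_sub, Matrix.sub_mul, Matrix.mul_sub]
    noncomm_ring
  rw [hdecomp]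
  have h1 : hsNorm ((A - A') * Aᵀ) ≤ Real.sqrt K * hsNorm (A - A') :=
    hsNorm_mul_transpose_le hK _ _ hA
  have h2 : hsNorm (A' * (A - A')ᵀ) ≤ Real.sqrt K * hsNorm (A - A') := by
    have e : hsNorm (A' * (A - A')ᵀ) = hsNorm ((A - A') * A'ᵀ) := by
      rw [← hsNorm_transpose (A' * (A - A')ᵀ), Matrix.transpose_mul, Matrix.transpose_transpose]
    rw [e]
    exact hsNorm_mul_transpose_le hK _ _ hA'
  calc hsNorm ((A - A') * Aᵀ + A' * (A - A')ᵀ)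
      ≤ hsNorm ((A - A') * Aᵀ) + hsNorm (A' * (A - A')ᵀ) := by
        rw [hsNorm_eq, hsNorm_eq, hsNorm_eq, show toE ((A - A') * Aᵀ + A' * (A - A')ᵀ) =
          toE ((A - A') * Aᵀ) + toE (A' * (A - A')ᵀ) from rfl]
        exact norm_add_le _ _
    _ ≤ 2 * Real.sqrt K * hsNorm (A - A') := by linarith

end Aux

namespace Aux
variable {d n : ℕ}

lemma sum_mulVecE {ι : Type*} (s : Finset ι) (f : ι → Matrix (Fin d) (Fin n) ℝ)
    (w : EuclideanSpace ℝ (Fin n)) :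
    mulVecE (∑ i ∈ s, f i) w = ∑ i ∈ s, mulVecE (f i) w := by
  classical
  induction s using Finset.induction with
  | empty => ext j; simp [mulVecE, Matrix.mulVec, dotProduct]
  | insert _ _ h ih =>
      rw [Finset.sum_insert h, Finset.sum_insert h, ← ih]
      ext j
      show ((_ + _ : Matrix _ _ ℝ) *ᵥ w.ofLp) j = _
      rw [Matrix.add_mulVec]
      rfl

lemma smul_mulVecE (c : ℝ) (A : Matrix (Fin d) (Fin n) ℝ) (w : EuclideanSpace ℝ (Fin n)) :
    mulVecE (c • A) w = c • mulVecE A w := by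
  show WithLp.toLp 2 ((c • A) *ᵥ w.ofLp) = c • WithLp.toLp 2 (A *ᵥ w.ofLp)
  rw [Matrix.smul_mulVec, WithLp.toLp_smul]

lemma integrable_euclid {α : Type*} [MeasurableSpace α] (μ : Measure α) [IsFiniteMeasure μ]
    {ι : Type*} [Fintype ι] (G : α → EuclideanSpace ℝ ι) (hm : ∀ j, Measurable fun y => G y j)
    (C : ℝ) (hbd : ∀ y, ‖G y‖ ≤ C) : Integrable G μ :=
  ⟨((WithLp.measurable_toLp 2 _).comp (measurable_pi_lambda _ hm)).aestronglyMeasurable,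
    MeasureTheory.HasFiniteIntegral.of_bounded (ae_of_all _ hbd)⟩

lemma euclid_integral_apply {α : Type*} [MeasurableSpace α] {μ : Measure α}
    {ι : Type*} [Fintype ι] {G : α → EuclideanSpace ℝ ι} (hG : Integrable G μ) (j : ι) :
    (∫ y, G y ∂μ) j = ∫ y, G y j ∂μ := by
  have := (EuclideanSpace.proj (𝕜 := ℝ) j).integral_comp_comm hG
  simpa using this.symm

lemma euclid_norm_le_of_bounded {ι : Type*} [Fintype ι] (u : EuclideanSpace ℝ ι) (C : ℝ)
    (h : ∀ j, |u j| ≤ C) : ‖u‖ ≤ Real.sqrt ((Fintype.card ι) * C^2) := by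
  rw [EuclideanSpace.norm_eq]
  apply Real.sqrt_le_sqrt
  calc ∑ i, ‖u i‖^2 ≤ ∑ _i : ι, C^2 := by
        apply Finset.sum_le_sum
        intro i _
        rw [Real.norm_eq_abs]
        have h0 : (0:ℝ) ≤ |u i| := abs_nonneg _
        nlinarith [h i]
    _ = (Fintype.card ι) * C^2 := by rw [Finset.sum_const, Finset.card_univ, nsmul_eq_mul]

lemma toE_integral {α : Type*} [MeasurableSpace α] (μ : Measure α)
    (F : α → Matrix (Fin d) (Fin n) ℝ)
    (hint : Integrable (fun y => toE (F y)) μ) :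
    toE (Matrix.of fun a b => ∫ y, F y a b ∂μ) = ∫ y, toE (F y) ∂μ := by
  ext p
  show (∫ y, F y p.1 p.2 ∂μ) = (∫ y, toE (F y) ∂μ) p
  rw [euclid_integral_apply hint p]
  rfl

lemma mulVecE_integral {α : Type*} [MeasurableSpace α] (μ : Measure α)
    (F : α → Matrix (Fin d) (Fin n) ℝ) (w : EuclideanSpace ℝ (Fin n))
    (hentry : ∀ a b, Integrable (fun y => F y a b) μ)
    (hint : Integrable (fun y => mulVecE (F y) w) μ) :
    mulVecE (Matrix.of fun a b => ∫ y, F y a b ∂μ) w = ∫ y, mulVecE (F y) w ∂μ := by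
  ext j
  rw [euclid_integral_apply hint j]
  show ∑ k, (∫ y, F y j k ∂μ) * w k = ∫ y, (mulVecE (F y) w) j ∂μ
  have e1 : ∀ k : Fin n, (∫ y, F y j k ∂μ) * w k = ∫ y, F y j k * w k ∂μ := by
    intro k
    rw [← integral_mul_const]
  rw [Finset.sum_congr rfl fun k _ => e1 k, ← integral_finset_sum]
  · rfl
  · intro k _
    exact (hentry j k).mul_const _

end Aux


open Aux in
/-- Lipschitz estimate for the empirical-vs-mean diffusion error:
with `σ̃` Lipschitz (in the Hilbert–Schmidt norm) with constant `K_σ` and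
`σ̃σ̃* ≤ K_σ I`, and
`Σⁱ(x) = ((1/N)∑_m σ̃(xⁱ,x^m))((1/N)∑_m σ̃(xⁱ,x^m))* − (∫σ̃(xⁱ,y)μ(dy))(∫σ̃(xⁱ,y)μ(dy))*`,
one has `∑_i ‖Σⁱ(x)‖_HS − ∑_i ‖Σⁱ(x̃)‖_HS ≤ 6√2 K_σ ∑_i |xⁱ − x̃ⁱ|`. -/
theorem diffusion_error_lipschitz
    (d n : ℕ) (K_σ : ℝ) (hKσ : 0 < K_σ)
    (σ : EuclideanSpace ℝ (Fin d) → EuclideanSpace ℝ (Fin d) → Matrix (Fin d) (Fin n) ℝ)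
    (hσmeas : ∀ i j, Measurable fun p : EuclideanSpace ℝ (Fin d) × EuclideanSpace ℝ (Fin d) =>
      σ p.1 p.2 i j)
    (hσlip : ∀ x₁ x₂ y₁ y₂ : EuclideanSpace ℝ (Fin d),
      (1 / 2) * hsNorm (σ x₁ y₁ - σ x₂ y₂) ^ 2 ≤ K_σ * (‖x₁ - x₂‖ ^ 2 + ‖y₁ - y₂‖ ^ 2))
    (hσbd : ∀ x y : EuclideanSpace ℝ (Fin d),
      (K_σ • (1 : Matrix (Fin d) (Fin d) ℝ) - σ x y * (σ x y)ᵀ).PosSemidef)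
    (μ : Measure (EuclideanSpace ℝ (Fin d))) [IsProbabilityMeasure μ]
    (N : ℕ) (hN : 1 ≤ N)
    (S : Fin N → (Fin N → EuclideanSpace ℝ (Fin d)) → Matrix (Fin d) (Fin d) ℝ)
    (hS : ∀ i x, S i x =
      (Matrix.of fun a b => (1 / (N : ℝ)) * ∑ m, σ (x i) (x m) a b) *
        (Matrix.of fun a b => (1 / (N : ℝ)) * ∑ m, σ (x i) (x m) a b)ᵀ -
      (Matrix.of fun a b => ∫ y, σ (x i) y a b ∂μ) *
        (Matrix.of fun a b => ∫ y, σ (x i) y a b ∂μ)ᵀ)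
    (x x' : Fin N → EuclideanSpace ℝ (Fin d)) :
    ∑ i, hsNorm (S i x) - ∑ i, hsNorm (S i x')
      ≤ 6 * Real.sqrt 2 * K_σ * ∑ i, ‖x i - x' i‖ := by
  have hNpos : (0:ℝ) < (N:ℝ) := by exact_mod_cast hN
  have hNne : ((N:ℝ)) ≠ 0 := ne_of_gt hNpos
  set sK := Real.sqrt K_σ with hsK
  set s2 := Real.sqrt (2*K_σ) with hs2def
  set T := ∑ i, ‖x i - x' i‖ with hT
  set Am : (Fin N → EuclideanSpace ℝ (Fin d)) → Fin N → Matrix (Fin d) (Fin n) ℝ :=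
    fun z i => Matrix.of fun a b => (1 / (N : ℝ)) * ∑ m, σ (z i) (z m) a b with hAm
  set Bm : EuclideanSpace ℝ (Fin d) → Matrix (Fin d) (Fin n) ℝ :=
    fun c => Matrix.of fun a b => ∫ y, σ c y a b ∂μ with hBm
  have hS' : ∀ i, ∀ z, S i z = Am z i * (Am z i)ᵀ - Bm (z i) * (Bm (z i))ᵀ := by
    intro i z; rw [hS i z, hAm, hBm]
  -- entrywise bound on σ
  have hσop : ∀ c y (w : EuclideanSpace ℝ (Fin n)),
      ‖mulVecE (σ c y) w‖ ≤ sK * ‖w‖ := fun c y w =>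
    opBd_of_psd hKσ.le (σ c y) (hσbd c y) w
  have hσe : ∀ c y a b, |σ c y a b| ≤ sK := by
    intro c y a b
    have h1 := hσop c y (EuclideanSpace.single b 1)
    have h2 : mulVecE (σ c y) (EuclideanSpace.single b 1) a = σ c y a b := by
      rw [mulVecE_apply]
      rw [Finset.sum_eq_single b]
      · simp
      · intro k _ hk; simp [EuclideanSpace.single_apply, hk]
      · simp
    have h3 := abs_apply_le_norm (mulVecE (σ c y) (EuclideanSpace.single b 1)) a
    rw [h2] at h3
    refine h3.trans (h1.trans ?_)
    simp [EuclideanSpace.norm_single]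
  -- Lipschitz bound in hsNorm
  have hlip : ∀ x₁ x₂ y₁ y₂, hsNorm (σ x₁ y₁ - σ x₂ y₂) ≤ s2 * (‖x₁ - x₂‖ + ‖y₁ - y₂‖) := by
    intro x₁ x₂ y₁ y₂
    have h := hσlip x₁ x₂ y₁ y₂
    have hs := hsNorm_nonneg (σ x₁ y₁ - σ x₂ y₂)
    have hR : (0:ℝ) ≤ s2 * (‖x₁ - x₂‖ + ‖y₁ - y₂‖) := by positivity
    have h2 : hsNorm (σ x₁ y₁ - σ x₂ y₂)^2 ≤ (s2 * (‖x₁ - x₂‖ + ‖y₁ - y₂‖))^2 := by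
      have hsq : s2^2 = 2*K_σ := Real.sq_sqrt (by positivity)
      nlinarith [norm_nonneg (x₁ - x₂), norm_nonneg (y₁ - y₂),
        mul_nonneg (norm_nonneg (x₁ - x₂)) (norm_nonneg (y₁ - y₂))]
    have := Real.sqrt_le_sqrt h2
    rwa [Real.sqrt_sq hs, Real.sqrt_sq hR] at this
  -- measurability / integrability for fixed first argument
  have hmc : ∀ c a b, Measurable fun y => σ c y a b := by
    intro c a b
    exact (hσmeas a b).comp (measurable_const.prodMk measurable_id)
  have hent : ∀ c a b, Integrable (fun y => σ c y a b) μ := by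
    intro c a b
    refine ⟨(hmc c a b).aestronglyMeasurable,
      MeasureTheory.HasFiniteIntegral.of_bounded (C := sK) (ae_of_all _ fun y => ?_)⟩
    rw [Real.norm_eq_abs]; exact hσe c y a b
  have htoE : ∀ c, Integrable (fun y => toE (σ c y)) μ := by
    intro c
    refine integrable_euclid μ _ (fun p => hmc c p.1 p.2)
      (Real.sqrt ((Fintype.card (Fin d × Fin n)) * sK^2)) (fun y => ?_)
    exact euclid_norm_le_of_bounded _ _ (fun p => hσe c y p.1 p.2)
  have hmv : ∀ c (w : EuclideanSpace ℝ (Fin n)),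
      Integrable (fun y => mulVecE (σ c y) w) μ := by
    intro c w
    refine integrable_euclid μ _ (fun j => ?_) (sK * ‖w‖) (fun y => hσop c y w)
    show Measurable fun y => ∑ k, σ c y j k * w k
    exact Finset.measurable_sum _ fun k _ => (hmc c j k).mul_const _
  -- operator bounds for Am and Bm
  have hAop : ∀ z i (w : EuclideanSpace ℝ (Fin n)), ‖mulVecE (Am z i) w‖ ≤ sK * ‖w‖ := by
    intro z i w
    have hA_eq : Am z i = (1/(N:ℝ)) • ∑ m, σ (z i) (z m) := by
      ext a b
      simp [hAm, Matrix.smul_apply, Matrix.sum_apply, smul_eq_mul]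
    rw [hA_eq, smul_mulVecE, sum_mulVecE, norm_smul]
    calc ‖(1/(N:ℝ))‖ * ‖∑ m, mulVecE (σ (z i) (z m)) w‖
        ≤ (1/(N:ℝ)) * ∑ m : Fin N, (sK * ‖w‖) := by
          apply mul_le_mul
          · rw [Real.norm_eq_abs, abs_of_pos (by positivity)]
          · exact (norm_sum_le _ _).trans (Finset.sum_le_sum fun m _ => hσop _ _ _)
          · exact norm_nonneg _
          · positivity
      _ = sK * ‖w‖ := by
          rw [Finset.sum_const, Finset.card_univ, Fintype.card_fin, nsmul_eq_mul]
          field_simp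
  have hBop : ∀ c (w : EuclideanSpace ℝ (Fin n)), ‖mulVecE (Bm c) w‖ ≤ sK * ‖w‖ := by
    intro c w
    rw [hBm]
    rw [show mulVecE (Matrix.of fun a b => ∫ y, σ c y a b ∂μ) w
        = ∫ y, mulVecE (σ c y) w ∂μ from mulVecE_integral μ _ w (hent c) (hmv c w)]
    calc ‖∫ y, mulVecE (σ c y) w ∂μ‖ ≤ ∫ y, ‖mulVecE (σ c y) w‖ ∂μ :=
          norm_integral_le_integral_norm _
      _ ≤ ∫ _y, sK * ‖w‖ ∂μ :=
          integral_mono (hmv c w).norm (integrable_const _) (fun y => hσop c y w)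
      _ = sK * ‖w‖ := by simp
  -- Lipschitz bounds for Am and Bm
  have hB_lip : ∀ i : Fin N, hsNorm (Bm (x i) - Bm (x' i)) ≤ s2 * ‖x i - x' i‖ := by
    intro i
    have hFint : Integrable (fun y => toE (σ (x i) y - σ (x' i) y)) μ := by
      have e : (fun y => toE (σ (x i) y - σ (x' i) y))
          = fun y => toE (σ (x i) y) - toE (σ (x' i) y) := funext fun y => toE_sub _ _
      rw [e]; exact (htoE _).sub (htoE _)
    have hBdiff : Bm (x i) - Bm (x' i)
        = Matrix.of fun a b => ∫ y, (σ (x i) y - σ (x' i) y) a b ∂μ := by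
      ext a b
      show (∫ y, σ (x i) y a b ∂μ) - (∫ y, σ (x' i) y a b ∂μ) = _
      rw [← integral_sub (hent _ a b) (hent _ a b)]
      rfl
    rw [hBdiff, hsNorm_eq, toE_integral μ _ hFint]
    calc ‖∫ y, toE (σ (x i) y - σ (x' i) y) ∂μ‖
        ≤ ∫ y, ‖toE (σ (x i) y - σ (x' i) y)‖ ∂μ := norm_integral_le_integral_norm _
      _ ≤ ∫ _y, s2 * ‖x i - x' i‖ ∂μ := by
          refine integral_mono hFint.norm (integrable_const _) (fun y => ?_)
          rw [← hsNorm_eq]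
          simpa using hlip (x i) (x' i) y y
      _ = s2 * ‖x i - x' i‖ := by simp
  have hA_lip : ∀ i : Fin N, hsNorm (Am x i - Am x' i)
      ≤ (1/(N:ℝ)) * (s2 * ((N:ℝ) * ‖x i - x' i‖ + T)) := by
    intro i
    have hA_eq : Am x i - Am x' i
        = (1/(N:ℝ)) • ∑ m, (σ (x i) (x m) - σ (x' i) (x' m)) := by
      ext a b
      simp [hAm, Matrix.smul_apply, Matrix.sum_apply, smul_eq_mul, Finset.sum_sub_distrib,
        mul_sub]
    rw [hA_eq, hsNorm_smul, abs_of_pos (by positivity)]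
    have h1 : hsNorm (∑ m, (σ (x i) (x m) - σ (x' i) (x' m)))
        ≤ s2 * ((N:ℝ) * ‖x i - x' i‖ + T) := by
      calc hsNorm (∑ m, (σ (x i) (x m) - σ (x' i) (x' m)))
          ≤ ∑ m, hsNorm (σ (x i) (x m) - σ (x' i) (x' m)) := hsNorm_sum_le _ _
        _ ≤ ∑ m, s2 * (‖x i - x' i‖ + ‖x m - x' m‖) :=
            Finset.sum_le_sum fun m _ => hlip _ _ _ _
        _ = s2 * ((N:ℝ) * ‖x i - x' i‖ + T) := by
            rw [← Finset.mul_sum, Finset.sum_add_distrib, Finset.sum_const,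
              Finset.card_univ, Fintype.card_fin, nsmul_eq_mul, hT]
    exact mul_le_mul_of_nonneg_left h1 (by positivity)
  -- per-index bound
  have key : ∀ i : Fin N, hsNorm (S i x) - hsNorm (S i x')
      ≤ 2*sK*((1/(N:ℝ)) * (s2 * ((N:ℝ) * ‖x i - x' i‖ + T))) + 2*sK*(s2 * ‖x i - x' i‖) := by
    intro i
    have hSdiff : S i x - S i x'
        = (Am x i * (Am x i)ᵀ - Am x' i * (Am x' i)ᵀ)
          - (Bm (x i) * (Bm (x i))ᵀ - Bm (x' i) * (Bm (x' i))ᵀ) := by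
      rw [hS' i x, hS' i x']
      abel
    calc hsNorm (S i x) - hsNorm (S i x') ≤ hsNorm (S i x - S i x') := sub_hsNorm _ _
      _ = hsNorm ((Am x i * (Am x i)ᵀ - Am x' i * (Am x' i)ᵀ)
          - (Bm (x i) * (Bm (x i))ᵀ - Bm (x' i) * (Bm (x' i))ᵀ)) := by rw [hSdiff]
      _ ≤ hsNorm (Am x i * (Am x i)ᵀ - Am x' i * (Am x' i)ᵀ)
          + hsNorm (Bm (x i) * (Bm (x i))ᵀ - Bm (x' i) * (Bm (x' i))ᵀ) := hsNorm_sub_le _ _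
      _ ≤ 2*sK * hsNorm (Am x i - Am x' i) + 2*sK * hsNorm (Bm (x i) - Bm (x' i)) :=
          add_le_add (prod_diff_le hKσ.le _ _ (hAop x i) (hAop x' i))
            (prod_diff_le hKσ.le _ _ (hBop (x i)) (hBop (x' i)))
      _ ≤ 2*sK*((1/(N:ℝ)) * (s2 * ((N:ℝ) * ‖x i - x' i‖ + T))) + 2*sK*(s2 * ‖x i - x' i‖) :=
          add_le_add (mul_le_mul_of_nonneg_left (hA_lip i) (by positivity))
            (mul_le_mul_of_nonneg_left (hB_lip i) (by positivity))
  -- sum up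
  have hKK : sK * sK = K_σ := Real.mul_self_sqrt hKσ.le
  have hs2' : s2 = Real.sqrt 2 * sK := by rw [hs2def, hsK, Real.sqrt_mul (by norm_num)]
  calc ∑ i, hsNorm (S i x) - ∑ i, hsNorm (S i x')
      = ∑ i, (hsNorm (S i x) - hsNorm (S i x')) := (Finset.sum_sub_distrib ..).symm
    _ ≤ ∑ i, (2*sK*((1/(N:ℝ)) * (s2 * ((N:ℝ) * ‖x i - x' i‖ + T))) + 2*sK*(s2 * ‖x i - x' i‖)) :=
        Finset.sum_le_sum fun i _ => key i
    _ = ∑ i, ((2*sK*s2 + 2*sK*s2) * ‖x i - x' i‖ + (2*sK*s2*T)/(N:ℝ)) := by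
        refine Finset.sum_congr rfl fun i _ => ?_
        field_simp
        ring
    _ = (2*sK*s2 + 2*sK*s2) * T + (N:ℝ) * ((2*sK*s2*T)/(N:ℝ)) := by
        rw [Finset.sum_add_distrib, ← Finset.mul_sum, ← hT, Finset.sum_const,
          Finset.card_univ, Fintype.card_fin, nsmul_eq_mul]
    _ = 6 * Real.sqrt 2 * K_σ * T := by
        rw [hs2']
        field_simp
        linear_combination (6 * T) * hKK
end
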